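/- arXiv:2010.12843 — 2 statements merged into one kernel-verified Lean document; each statement's English description precedes it below -/
import Mathlib

section
/- There exists a constant C > 0, depending only on M, such that for every smooth function f on a neighbourhood of the closure of M one has |f²|_{L⁴_x L³_z} ≤ C |f|_{L⁶}^{3/2} ‖f³‖^{1/6}, where f² and f³ denote the pointwise square and cube of f and ‖f³‖ is the H¹(M) norm of f³. -/
open MeasureTheory Set Filter

noncomputable section

set_option maxHeartbeats 1000000

namespace Stmt4Aux

lemma integrableOn_Ioo {a b : ℝ} {u : ℝ → ℝ} (hu : ContinuousOn u (Icc a b)) :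
    IntegrableOn u (Ioo a b) :=
  (hu.integrableOn_compact isCompact_Icc).mono_set Ioo_subset_Icc_self

lemma finiteRestrict (a b : ℝ) : IsFiniteMeasure (volume.restrict (Ioo a b)) := by
  constructor
  rw [Measure.restrict_apply_univ]
  exact measure_Ioo_lt_top

/-- Continuity of a parametric integral. -/
lemma contOn_param {α : Type*} [TopologicalSpace α] [FirstCountableTopology α]
    {K : Set α} (hK : IsCompact K) {c d : ℝ} {F : α → ℝ → ℝ}
    (hF : ContinuousOn (fun q : α × ℝ => F q.1 q.2) (K ×ˢ Icc c d)) :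
    ContinuousOn (fun p => ∫ z in Ioo c d, F p z) K := by
  haveI := finiteRestrict c d
  intro p hp
  obtain ⟨C, hC⟩ := (hK.prod isCompact_Icc).exists_bound_of_continuousOn hF
  refine continuousWithinAt_of_dominated ?_ ?_ (integrable_const C) ?_
  · refine eventually_nhdsWithin_of_forall (fun x hx => ?_)
    have hsl : ContinuousOn (F x) (Icc c d) :=
      hF.comp (Continuous.prodMk_right x).continuousOn (fun z hz => ⟨hx, hz⟩)
    exact (hsl.mono Ioo_subset_Icc_self).aestronglyMeasurable measurableSet_Ioo
  · refine eventually_nhdsWithin_of_forall (fun x hx => ?_)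
    exact (ae_restrict_iff' measurableSet_Ioo).2
      (Eventually.of_forall fun z hz => hC (x, z) ⟨hx, Ioo_subset_Icc_self hz⟩)
  · refine (ae_restrict_iff' measurableSet_Ioo).2 (Eventually.of_forall fun z hz => ?_)
    have hsl : ContinuousOn (fun x => F x z) K :=
      hF.comp ((continuous_id.prodMk continuous_const).continuousOn)
        (fun x hx => ⟨hx, Ioo_subset_Icc_self hz⟩)
    exact hsl p hp


lemma memLp_Ioo {a b p : ℝ} {u : ℝ → ℝ} (hu : ContinuousOn u (Icc a b)) :
    MemLp u (ENNReal.ofReal p) (volume.restrict (Ioo a b)) := by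
  haveI := finiteRestrict a b
  obtain ⟨C, hC⟩ := isCompact_Icc.exists_bound_of_continuousOn hu
  refine MemLp.of_bound
    ((hu.mono Ioo_subset_Icc_self).aestronglyMeasurable measurableSet_Ioo) C ?_
  exact (ae_restrict_iff' measurableSet_Ioo).2
    (Eventually.of_forall fun x hx => hC x (Ioo_subset_Icc_self hx))

lemma holder_Ioo {p q : ℝ} (hpq : Real.HolderConjugate p q) {a b : ℝ} {u v : ℝ → ℝ}
    (hu : ContinuousOn u (Icc a b)) (hv : ContinuousOn v (Icc a b))
    (hu0 : ∀ x ∈ Ioo a b, 0 ≤ u x) (hv0 : ∀ x ∈ Ioo a b, 0 ≤ v x) :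
    ∫ x in Ioo a b, u x * v x ≤
      (∫ x in Ioo a b, u x ^ p) ^ (1/p) * (∫ x in Ioo a b, v x ^ q) ^ (1/q) := by
  refine integral_mul_le_Lp_mul_Lq_of_nonneg hpq ?_ ?_ (memLp_Ioo hu) (memLp_Ioo hv)
  · exact (ae_restrict_iff' measurableSet_Ioo).2 (Eventually.of_forall hu0)
  · exact (ae_restrict_iff' measurableSet_Ioo).2 (Eventually.of_forall hv0)

lemma cs_Ioo {a b : ℝ} {u v : ℝ → ℝ}
    (hu : ContinuousOn u (Icc a b)) (hv : ContinuousOn v (Icc a b))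
    (hu0 : ∀ x ∈ Icc a b, 0 ≤ u x) (hv0 : ∀ x ∈ Icc a b, 0 ≤ v x) :
    ∫ x in Ioo a b, u x * v x ≤
      Real.sqrt (∫ x in Ioo a b, u x ^ 2) * Real.sqrt (∫ x in Ioo a b, v x ^ 2) := by
  have h := holder_Ioo (p := 2) (q := 2) Real.HolderConjugate.two_two hu hv
    (fun x hx => hu0 x (Ioo_subset_Icc_self hx)) (fun x hx => hv0 x (Ioo_subset_Icc_self hx))
  have e2 : ∀ w : ℝ, w ^ (2:ℝ) = w ^ (2:ℕ) := fun w => by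
    rw [show (2:ℝ) = ((2:ℕ):ℝ) by norm_num, Real.rpow_natCast]
  rw [Real.sqrt_eq_rpow, Real.sqrt_eq_rpow]
  simpa only [e2] using h

lemma exists_le_avg {a b : ℝ} (hab : a < b) {u : ℝ → ℝ} (hu : ContinuousOn u (Icc a b)) :
    ∃ x₀ ∈ Icc a b, u x₀ ≤ (b - a)⁻¹ * ∫ x in Ioo a b, u x := by
  obtain ⟨x₀, hx₀, hmin⟩ := isCompact_Icc.exists_isMinOn (nonempty_Icc.2 hab.le) hu
  refine ⟨x₀, hx₀, ?_⟩
  have h1 : ∫ _x in Ioo a b, u x₀ ≤ ∫ x in Ioo a b, u x := by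
    haveI := finiteRestrict a b
    exact setIntegral_mono_on (integrable_const _) (integrableOn_Ioo hu) measurableSet_Ioo
      (fun x hx => hmin (Ioo_subset_Icc_self hx))
  rw [setIntegral_const, Real.volume_real_Ioo_of_le (by linarith), smul_eq_mul] at h1
  rw [inv_mul_eq_div, le_div_iff₀ (by linarith)]
  linarith [h1]

lemma ftc_bound {a b : ℝ} {u u' : ℝ → ℝ}
    (hderiv : ∀ x ∈ Icc a b, HasDerivAt u (u' x) x)
    (hu' : ContinuousOn u' (Icc a b)) {x x₀ : ℝ} (hx : x ∈ Icc a b) (hx₀ : x₀ ∈ Icc a b) :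
    u x ≤ u x₀ + ∫ t in Ioo a b, |u' t| := by
  have hIoo : IntegrableOn (fun t => |u' t|) (Ioo a b) := (integrableOn_Ioo hu').abs
  have hsub : ∀ {c d : ℝ}, c ∈ Icc a b → d ∈ Icc a b →
      ∫ t in Ioc c d, |u' t| ≤ ∫ t in Ioo a b, |u' t| := by
    intro c d hc hd
    refine setIntegral_mono_set hIoo
      ((ae_restrict_iff' measurableSet_Ioo).2 (Eventually.of_forall fun t _ => abs_nonneg _)) ?_
    have e1 : (Ioc c d : Set ℝ) ≤ᵐ[volume] Icc a b :=
      HasSubset.Subset.eventuallyLE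
        (fun t ht => ⟨le_trans hc.1 (le_of_lt ht.1), le_trans ht.2 hd.2⟩)
    exact e1.trans (Ioo_ae_eq_Icc (μ := volume) (a := a) (b := b)).symm.le
  have hint : IntervalIntegrable u' volume x₀ x :=
    (hu'.mono (uIcc_subset_Icc hx₀ hx)).intervalIntegrable
  have hftc := intervalIntegral.integral_eq_sub_of_hasDerivAt
    (f := u) (f' := u') (a := x₀) (b := x)
    (fun t ht => hderiv t (uIcc_subset_Icc hx₀ hx ht)) hint
  have key : ∫ t in x₀..x, u' t ≤ ∫ t in Ioo a b, |u' t| := by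
    rcases le_total x₀ x with hle | hle
    · calc ∫ t in x₀..x, u' t ≤ |∫ t in x₀..x, u' t| := le_abs_self _
        _ ≤ ∫ t in x₀..x, |u' t| := intervalIntegral.abs_integral_le_integral_abs hle
        _ = ∫ t in Ioc x₀ x, |u' t| := intervalIntegral.integral_of_le hle
        _ ≤ _ := hsub hx₀ hx
    · have hsymm : ∫ t in x₀..x, u' t = -∫ t in x..x₀, u' t :=
        intervalIntegral.integral_symm x x₀
      calc ∫ t in x₀..x, u' t ≤ |∫ t in x..x₀, u' t| := by
            rw [hsymm]; exact neg_le_abs _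
        _ ≤ ∫ t in x..x₀, |u' t| := intervalIntegral.abs_integral_le_integral_abs hle
        _ = ∫ t in Ioc x x₀, |u' t| := intervalIntegral.integral_of_le hle
        _ ≤ _ := hsub hx hx₀
  linarith [hftc, key]

/-- Fubini swap for a continuous function on a closed rectangle. -/
lemma swap_Ioo {a b c d : ℝ} {F : ℝ → ℝ → ℝ}
    (hF : ContinuousOn (fun p : ℝ × ℝ => F p.1 p.2) (Icc a b ×ˢ Icc c d)) :
    ∫ x in Ioo a b, ∫ y in Ioo c d, F x y = ∫ y in Ioo c d, ∫ x in Ioo a b, F x y := by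
  apply integral_integral_swap
  show Integrable _ ((volume.restrict (Ioo a b)).prod (volume.restrict (Ioo c d)))
  rw [Measure.prod_restrict, ← Measure.volume_eq_prod]
  have h2 : IntegrableOn (fun p : ℝ × ℝ => F p.1 p.2) (Icc a b ×ˢ Icc c d) volume :=
    hF.integrableOn_compact (isCompact_Icc.prod isCompact_Icc)
  exact h2.mono_set (prod_mono Ioo_subset_Icc_self Ioo_subset_Icc_self)

/-- The closed box. -/
def Box (L h : ℝ) : Set (ℝ × ℝ × ℝ) := Icc 0 L ×ˢ Icc 0 L ×ˢ Icc (-h) 0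

variable {L h : ℝ}

lemma mem_Box {x y z : ℝ} (hx : x ∈ Icc 0 L) (hy : y ∈ Icc 0 L) (hz : z ∈ Icc (-h) 0) :
    ((x, y, z) : ℝ × ℝ × ℝ) ∈ Box L h := ⟨hx, hy, hz⟩

section W
variable {W : ℝ → ℝ → ℝ → ℝ}
  (hW : ContinuousOn (fun p : ℝ × ℝ × ℝ => W p.1 p.2.1 p.2.2) (Box L h))

include hW

/-- swap the first two coordinates. -/
lemma cont_swapW :
    ContinuousOn (fun p : ℝ × ℝ × ℝ => W p.2.1 p.1 p.2.2) (Box L h) := by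
  have hmap : Continuous (fun p : ℝ × ℝ × ℝ => ((p.2.1, p.1, p.2.2) : ℝ × ℝ × ℝ)) := by fun_prop
  exact hW.comp hmap.continuousOn (fun p hp => ⟨hp.2.1, hp.1, hp.2.2⟩)

lemma cont_slice_z {x y : ℝ} (hx : x ∈ Icc 0 L) (hy : y ∈ Icc 0 L) :
    ContinuousOn (fun z => W x y z) (Icc (-h) 0) := by
  have hmap : Continuous (fun z : ℝ => ((x, y, z) : ℝ × ℝ × ℝ)) := by fun_prop
  exact hW.comp hmap.continuousOn (fun z hz => ⟨hx, hy, hz⟩)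

lemma cont_slice_x {y z : ℝ} (hy : y ∈ Icc 0 L) (hz : z ∈ Icc (-h) 0) :
    ContinuousOn (fun t => W t y z) (Icc 0 L) := by
  have hmap : Continuous (fun t : ℝ => ((t, y, z) : ℝ × ℝ × ℝ)) := by fun_prop
  exact hW.comp hmap.continuousOn (fun t ht => ⟨ht, hy, hz⟩)

lemma cont_slice_xz {y : ℝ} (hy : y ∈ Icc 0 L) :
    ContinuousOn (fun p : ℝ × ℝ => W p.1 y p.2) (Icc 0 L ×ˢ Icc (-h) 0) := by
  have hmap : Continuous (fun p : ℝ × ℝ => ((p.1, y, p.2) : ℝ × ℝ × ℝ)) := by fun_prop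
  exact hW.comp hmap.continuousOn (fun p hp => ⟨hp.1, hy, hp.2⟩)

/-- `(x,y) ↦ ∫_z W` is continuous on the square. -/
lemma cont_int_z :
    ContinuousOn (fun p : ℝ × ℝ => ∫ z in Ioo (-h) 0, W p.1 p.2 z)
      (Icc 0 L ×ˢ Icc 0 L) := by
  refine contOn_param (isCompact_Icc.prod isCompact_Icc) ?_
  have hmap : Continuous (fun q : (ℝ × ℝ) × ℝ => ((q.1.1, q.1.2, q.2) : ℝ × ℝ × ℝ)) := by fun_prop
  exact hW.comp hmap.continuousOn (fun q hq => ⟨hq.1.1, hq.1.2, hq.2⟩)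

/-- `x ↦ ∫_y ∫_z W` is continuous. -/
lemma cont_int_yz :
    ContinuousOn (fun x => ∫ y in Ioo 0 L, ∫ z in Ioo (-h) 0, W x y z) (Icc 0 L) :=
  contOn_param isCompact_Icc (cont_int_z hW)

/-- `y ↦ ∫_x ∫_z W` is continuous. -/
lemma cont_int_xz :
    ContinuousOn (fun y => ∫ x in Ioo 0 L, ∫ z in Ioo (-h) 0, W x y z) (Icc 0 L) :=
  cont_int_yz (cont_swapW hW)

end W


lemma cont2_slice_right {s t : Set ℝ} {F : ℝ → ℝ → ℝ}
    (hF : ContinuousOn (fun p : ℝ × ℝ => F p.1 p.2) (s ×ˢ t)) {x : ℝ} (hx : x ∈ s) :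
    ContinuousOn (fun y => F x y) t :=
  hF.comp (Continuous.prodMk_right x).continuousOn (fun y hy => ⟨hx, hy⟩)

lemma cont2_slice_left {s t : Set ℝ} {F : ℝ → ℝ → ℝ}
    (hF : ContinuousOn (fun p : ℝ × ℝ => F p.1 p.2) (s ×ˢ t)) {y : ℝ} (hy : y ∈ t) :
    ContinuousOn (fun x => F x y) s :=
  hF.comp ((continuous_id.prodMk continuous_const).continuousOn) (fun x hx => ⟨hx, hy⟩)

/-- Iterated Cauchy–Schwarz on the box. -/
lemma cs3 {u v : ℝ → ℝ → ℝ → ℝ}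
    (hu : ContinuousOn (fun p : ℝ × ℝ × ℝ => u p.1 p.2.1 p.2.2) (Box L h))
    (hv : ContinuousOn (fun p : ℝ × ℝ × ℝ => v p.1 p.2.1 p.2.2) (Box L h)) :
    ∫ x in Ioo (0:ℝ) L, ∫ y in Ioo (0:ℝ) L, ∫ z in Ioo (-h) (0:ℝ), |u x y z| * |v x y z| ≤
      Real.sqrt (∫ x in Ioo (0:ℝ) L, ∫ y in Ioo (0:ℝ) L, ∫ z in Ioo (-h) (0:ℝ), u x y z ^ 2) *
      Real.sqrt (∫ x in Ioo (0:ℝ) L, ∫ y in Ioo (0:ℝ) L, ∫ z in Ioo (-h) (0:ℝ), v x y z ^ 2) := by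
  have hu2 : ContinuousOn (fun p : ℝ × ℝ × ℝ => u p.1 p.2.1 p.2.2 ^ 2) (Box L h) := hu.pow 2
  have hv2 : ContinuousOn (fun p : ℝ × ℝ × ℝ => v p.1 p.2.1 p.2.2 ^ 2) (Box L h) := hv.pow 2
  have habs : ContinuousOn
      (fun p : ℝ × ℝ × ℝ => |u p.1 p.2.1 p.2.2| * |v p.1 p.2.1 p.2.2|) (Box L h) :=
    hu.abs.mul hv.abs
  set U2 : ℝ → ℝ → ℝ := fun x y => ∫ z in Ioo (-h) (0:ℝ), u x y z ^ 2 with hU2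
  set V2 : ℝ → ℝ → ℝ := fun x y => ∫ z in Ioo (-h) (0:ℝ), v x y z ^ 2 with hV2
  have hU2c : ContinuousOn (fun p : ℝ × ℝ => U2 p.1 p.2) (Icc 0 L ×ˢ Icc 0 L) := by
    rw [hU2]; exact cont_int_z (W := fun a b c => u a b c ^ 2) hu2
  have hV2c : ContinuousOn (fun p : ℝ × ℝ => V2 p.1 p.2) (Icc 0 L ×ˢ Icc 0 L) := by
    rw [hV2]; exact cont_int_z (W := fun a b c => v a b c ^ 2) hv2
  have hU20 : ∀ x y, 0 ≤ U2 x y := fun x y => integral_nonneg (fun z => sq_nonneg _)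
  have hV20 : ∀ x y, 0 ≤ V2 x y := fun x y => integral_nonneg (fun z => sq_nonneg _)
  have step1 : ∀ x ∈ Icc (0:ℝ) L, ∀ y ∈ Icc (0:ℝ) L,
      (∫ z in Ioo (-h) (0:ℝ), |u x y z| * |v x y z|) ≤
        Real.sqrt (U2 x y) * Real.sqrt (V2 x y) := by
    intro x hx y hy
    have hcs := cs_Ioo ((cont_slice_z (W := u) hu hx hy).abs) ((cont_slice_z (W := v) hv hx hy).abs)
      (fun z _ => abs_nonneg _) (fun z _ => abs_nonneg _)
    simpa [sq_abs] using hcs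
  have step2 : ∀ x ∈ Icc (0:ℝ) L,
      (∫ y in Ioo (0:ℝ) L, ∫ z in Ioo (-h) (0:ℝ), |u x y z| * |v x y z|) ≤
        Real.sqrt (∫ y in Ioo (0:ℝ) L, U2 x y) *
        Real.sqrt (∫ y in Ioo (0:ℝ) L, V2 x y) := by
    intro x hx
    have hIcont : ContinuousOn (fun y => ∫ z in Ioo (-h) (0:ℝ), |u x y z| * |v x y z|)
        (Icc 0 L) := cont2_slice_right (F := fun a b => ∫ z in Ioo (-h) (0:ℝ), |u a b z| * |v a b z|) (cont_int_z (W := fun a b c => |u a b c| * |v a b c|) habs) hx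
    have hUy : ContinuousOn (fun y => Real.sqrt (U2 x y)) (Icc 0 L) :=
      (cont2_slice_right (F := U2) hU2c hx).sqrt
    have hVy : ContinuousOn (fun y => Real.sqrt (V2 x y)) (Icc 0 L) :=
      (cont2_slice_right (F := V2) hV2c hx).sqrt
    have hmono : (∫ y in Ioo (0:ℝ) L, ∫ z in Ioo (-h) (0:ℝ), |u x y z| * |v x y z|) ≤
        ∫ y in Ioo (0:ℝ) L, Real.sqrt (U2 x y) * Real.sqrt (V2 x y) :=
      setIntegral_mono_on (integrableOn_Ioo hIcont) (integrableOn_Ioo (hUy.mul hVy))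
        measurableSet_Ioo (fun y hy => step1 x hx y (Ioo_subset_Icc_self hy))
    have hcs := cs_Ioo hUy hVy (fun y _ => Real.sqrt_nonneg _) (fun y _ => Real.sqrt_nonneg _)
    have eU : (∫ y in Ioo (0:ℝ) L, Real.sqrt (U2 x y) ^ 2) = ∫ y in Ioo (0:ℝ) L, U2 x y :=
      setIntegral_congr_fun measurableSet_Ioo (fun y _ => Real.sq_sqrt (hU20 x y))
    have eV : (∫ y in Ioo (0:ℝ) L, Real.sqrt (V2 x y) ^ 2) = ∫ y in Ioo (0:ℝ) L, V2 x y :=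
      setIntegral_congr_fun measurableSet_Ioo (fun y _ => Real.sq_sqrt (hV20 x y))
    rw [eU, eV] at hcs
    exact hmono.trans hcs
  -- step 3: integrate in x
  have hIcont2 : ContinuousOn
      (fun x => ∫ y in Ioo (0:ℝ) L, ∫ z in Ioo (-h) (0:ℝ), |u x y z| * |v x y z|)
      (Icc 0 L) := cont_int_yz (W := fun a b c => |u a b c| * |v a b c|) habs
  have hUx : ContinuousOn (fun x => Real.sqrt (∫ y in Ioo (0:ℝ) L, U2 x y)) (Icc 0 L) :=
    (contOn_param isCompact_Icc hU2c).sqrt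
  have hVx : ContinuousOn (fun x => Real.sqrt (∫ y in Ioo (0:ℝ) L, V2 x y)) (Icc 0 L) :=
    (contOn_param isCompact_Icc hV2c).sqrt
  have hmono2 : (∫ x in Ioo (0:ℝ) L, ∫ y in Ioo (0:ℝ) L, ∫ z in Ioo (-h) (0:ℝ),
      |u x y z| * |v x y z|) ≤ ∫ x in Ioo (0:ℝ) L,
        Real.sqrt (∫ y in Ioo (0:ℝ) L, U2 x y) * Real.sqrt (∫ y in Ioo (0:ℝ) L, V2 x y) :=
    setIntegral_mono_on (integrableOn_Ioo hIcont2) (integrableOn_Ioo (hUx.mul hVx))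
      measurableSet_Ioo (fun x hx => step2 x (Ioo_subset_Icc_self hx))
  have hcs2 := cs_Ioo hUx hVx (fun x _ => Real.sqrt_nonneg _) (fun x _ => Real.sqrt_nonneg _)
  have eU2 : (∫ x in Ioo (0:ℝ) L, Real.sqrt (∫ y in Ioo (0:ℝ) L, U2 x y) ^ 2) =
      ∫ x in Ioo (0:ℝ) L, ∫ y in Ioo (0:ℝ) L, U2 x y :=
    setIntegral_congr_fun measurableSet_Ioo
      (fun x _ => Real.sq_sqrt (integral_nonneg (fun y => hU20 x y)))
  have eV2 : (∫ x in Ioo (0:ℝ) L, Real.sqrt (∫ y in Ioo (0:ℝ) L, V2 x y) ^ 2) =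
      ∫ x in Ioo (0:ℝ) L, ∫ y in Ioo (0:ℝ) L, V2 x y :=
    setIntegral_congr_fun measurableSet_Ioo
      (fun x _ => Real.sq_sqrt (integral_nonneg (fun y => hV20 x y)))
  rw [eU2, eV2] at hcs2
  exact hmono2.trans hcs2


/-- 2D Hölder interpolation step. -/
lemma holder2d {L : ℝ} {H : ℝ → ℝ → ℝ}
    (hH : ContinuousOn (fun p : ℝ × ℝ => H p.1 p.2) (Icc 0 L ×ˢ Icc 0 L))
    (hH0 : ∀ x y, 0 ≤ H x y) :
    ∫ x in Ioo (0:ℝ) L, ∫ y in Ioo (0:ℝ) L, H x y ^ ((4:ℝ)/3) ≤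
      (∫ x in Ioo (0:ℝ) L, ∫ y in Ioo (0:ℝ) L, H x y) ^ ((2:ℝ)/3) *
      (∫ x in Ioo (0:ℝ) L, ∫ y in Ioo (0:ℝ) L, H x y ^ 2) ^ ((1:ℝ)/3) := by
  have hpq : Real.HolderConjugate ((3:ℝ)/2) 3 := ⟨by norm_num, by norm_num, by norm_num⟩
  have key : ∀ w : ℝ, 0 ≤ w → w ^ ((2:ℝ)/3) * w ^ ((2:ℝ)/3) = w ^ ((4:ℝ)/3) := fun w hw => by
    rw [← Real.rpow_add' hw (by norm_num : (2:ℝ)/3 + 2/3 ≠ 0)]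
    norm_num
  have key2 : ∀ w : ℝ, 0 ≤ w → (w ^ ((2:ℝ)/3)) ^ ((3:ℝ)/2) = w := fun w hw => by
    rw [← Real.rpow_mul hw, show (2:ℝ)/3 * (3/2) = 1 by norm_num, Real.rpow_one]
  have key3 : ∀ w : ℝ, 0 ≤ w → (w ^ ((2:ℝ)/3)) ^ ((3:ℝ)) = w ^ (2:ℕ) := fun w hw => by
    rw [← Real.rpow_mul hw, show (2:ℝ)/3*3 = ((2:ℕ):ℝ) by norm_num, Real.rpow_natCast]
  have key4 : ∀ w : ℝ, 0 ≤ w → (w ^ ((1:ℝ)/3)) ^ ((3:ℝ)) = w := fun w hw => by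
    rw [← Real.rpow_mul hw]
    norm_num
  have hH43 : ContinuousOn (fun p : ℝ × ℝ => H p.1 p.2 ^ ((4:ℝ)/3)) (Icc 0 L ×ˢ Icc 0 L) :=
    hH.rpow_const (fun p _ => Or.inr (by norm_num))
  have hH23 : ContinuousOn (fun p : ℝ × ℝ => H p.1 p.2 ^ ((2:ℝ)/3)) (Icc 0 L ×ˢ Icc 0 L) :=
    hH.rpow_const (fun p _ => Or.inr (by norm_num))
  have hH2 : ContinuousOn (fun p : ℝ × ℝ => H p.1 p.2 ^ (2:ℕ)) (Icc 0 L ×ˢ Icc 0 L) :=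
    hH.pow 2
  have inner : ∀ x ∈ Icc (0:ℝ) L,
      (∫ y in Ioo (0:ℝ) L, H x y ^ ((4:ℝ)/3)) ≤
        (∫ y in Ioo (0:ℝ) L, H x y) ^ ((2:ℝ)/3) *
        (∫ y in Ioo (0:ℝ) L, H x y ^ 2) ^ ((1:ℝ)/3) := by
    intro x hx
    have hc : ContinuousOn (fun y => H x y ^ ((2:ℝ)/3)) (Icc 0 L) :=
      cont2_slice_right (F := fun a b => H a b ^ ((2:ℝ)/3)) hH23 hx
    have h1 := holder_Ioo hpq hc hc (fun y _ => Real.rpow_nonneg (hH0 x y) _)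
      (fun y _ => Real.rpow_nonneg (hH0 x y) _)
    have eL : (∫ y in Ioo (0:ℝ) L, H x y ^ ((4:ℝ)/3)) =
        ∫ y in Ioo (0:ℝ) L, H x y ^ ((2:ℝ)/3) * H x y ^ ((2:ℝ)/3) :=
      setIntegral_congr_fun measurableSet_Ioo (fun y _ => (key _ (hH0 x y)).symm)
    have eP : (∫ y in Ioo (0:ℝ) L, (H x y ^ ((2:ℝ)/3)) ^ ((3:ℝ)/2)) =
        ∫ y in Ioo (0:ℝ) L, H x y :=
      setIntegral_congr_fun measurableSet_Ioo (fun y _ => key2 _ (hH0 x y))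
    have eQ : (∫ y in Ioo (0:ℝ) L, (H x y ^ ((2:ℝ)/3)) ^ ((3:ℝ))) =
        ∫ y in Ioo (0:ℝ) L, H x y ^ 2 :=
      setIntegral_congr_fun measurableSet_Ioo (fun y _ => key3 _ (hH0 x y))
    rw [eP, eQ, show (1/((3:ℝ)/2)) = (2:ℝ)/3 by norm_num,
      show (1/(3:ℝ)) = (1:ℝ)/3 by norm_num] at h1
    rw [eL]
    exact h1
  -- outer step
  have hintH : ContinuousOn (fun x => ∫ y in Ioo (0:ℝ) L, H x y) (Icc 0 L) :=
    contOn_param isCompact_Icc hH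
  have hintH2 : ContinuousOn (fun x => ∫ y in Ioo (0:ℝ) L, H x y ^ 2) (Icc 0 L) :=
    contOn_param isCompact_Icc hH2
  have hu2c : ContinuousOn (fun x => (∫ y in Ioo (0:ℝ) L, H x y) ^ ((2:ℝ)/3)) (Icc 0 L) :=
    hintH.rpow_const (fun x _ => Or.inr (by norm_num))
  have hv2c : ContinuousOn (fun x => (∫ y in Ioo (0:ℝ) L, H x y ^ 2) ^ ((1:ℝ)/3)) (Icc 0 L) :=
    hintH2.rpow_const (fun x _ => Or.inr (by norm_num))
  have hIH0 : ∀ x, 0 ≤ ∫ y in Ioo (0:ℝ) L, H x y :=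
    fun x => integral_nonneg (fun y => hH0 x y)
  have hIH20 : ∀ x, 0 ≤ ∫ y in Ioo (0:ℝ) L, H x y ^ 2 :=
    fun x => integral_nonneg (fun y => sq_nonneg _)
  have hmono : (∫ x in Ioo (0:ℝ) L, ∫ y in Ioo (0:ℝ) L, H x y ^ ((4:ℝ)/3)) ≤
      ∫ x in Ioo (0:ℝ) L, (∫ y in Ioo (0:ℝ) L, H x y) ^ ((2:ℝ)/3) *
        (∫ y in Ioo (0:ℝ) L, H x y ^ 2) ^ ((1:ℝ)/3) :=
    setIntegral_mono_on (integrableOn_Ioo (contOn_param isCompact_Icc hH43))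
      (integrableOn_Ioo (hu2c.mul hv2c)) measurableSet_Ioo
      (fun x hx => inner x (Ioo_subset_Icc_self hx))
  have h2 := holder_Ioo hpq hu2c hv2c
    (fun x _ => Real.rpow_nonneg (hIH0 x) _) (fun x _ => Real.rpow_nonneg (hIH20 x) _)
  have eP2 : (∫ x in Ioo (0:ℝ) L, ((∫ y in Ioo (0:ℝ) L, H x y) ^ ((2:ℝ)/3)) ^ ((3:ℝ)/2)) =
      ∫ x in Ioo (0:ℝ) L, ∫ y in Ioo (0:ℝ) L, H x y :=
    setIntegral_congr_fun measurableSet_Ioo (fun x _ => key2 _ (hIH0 x))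
  have eQ2 : (∫ x in Ioo (0:ℝ) L, ((∫ y in Ioo (0:ℝ) L, H x y ^ 2) ^ ((1:ℝ)/3)) ^ ((3:ℝ))) =
      ∫ x in Ioo (0:ℝ) L, ∫ y in Ioo (0:ℝ) L, H x y ^ 2 :=
    setIntegral_congr_fun measurableSet_Ioo (fun x _ => key4 _ (hIH20 x))
  rw [eP2, eQ2, show (1/((3:ℝ)/2)) = (2:ℝ)/3 by norm_num,
    show (1/(3:ℝ)) = (1:ℝ)/3 by norm_num] at h2
  exact hmono.trans h2

/-- The directional (FTC + mean value) bound. -/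
lemma dir_bound {L h : ℝ} (hL : 0 < L) {g gx : ℝ → ℝ → ℝ → ℝ}
    (hg : ContinuousOn (fun p : ℝ × ℝ × ℝ => g p.1 p.2.1 p.2.2) (Box L h))
    (hgx : ContinuousOn (fun p : ℝ × ℝ × ℝ => gx p.1 p.2.1 p.2.2) (Box L h))
    (hder : ∀ x ∈ Icc (0:ℝ) L, ∀ y ∈ Icc (0:ℝ) L, ∀ z ∈ Icc (-h) (0:ℝ),
      HasDerivAt (fun t => g t y z) (gx x y z) x)
    {x y : ℝ} (hx : x ∈ Icc (0:ℝ) L) (hy : y ∈ Icc (0:ℝ) L) :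
    (∫ z in Ioo (-h) (0:ℝ), g x y z ^ 2) ≤
      L⁻¹ * (∫ t in Ioo (0:ℝ) L, ∫ z in Ioo (-h) (0:ℝ), g t y z ^ 2) +
      ∫ t in Ioo (0:ℝ) L, ∫ z in Ioo (-h) (0:ℝ), |2 * (g t y z * gx t y z)| := by
  have hg2 : ContinuousOn (fun p : ℝ × ℝ × ℝ => g p.1 p.2.1 p.2.2 ^ 2) (Box L h) := hg.pow 2
  have hD : ContinuousOn
      (fun p : ℝ × ℝ × ℝ => |2 * (g p.1 p.2.1 p.2.2 * gx p.1 p.2.1 p.2.2)|) (Box L h) :=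
    (continuousOn_const.mul (hg.mul hgx)).abs
  -- continuity of t ↦ ∫_z g t y z ^ 2
  have hHy : ContinuousOn (fun t => ∫ z in Ioo (-h) (0:ℝ), g t y z ^ 2) (Icc 0 L) :=
    cont2_slice_left (F := fun a b => ∫ z in Ioo (-h) (0:ℝ), g a b z ^ 2)
      (cont_int_z (W := fun a b c => g a b c ^ 2) hg2) hy
  obtain ⟨x₀, hx₀, havg⟩ := exists_le_avg (by linarith : (0:ℝ) < L) hHy
  rw [sub_zero] at havg
  -- pointwise FTC bound in z
  have hptz : ∀ z ∈ Icc (-h) (0:ℝ), g x y z ^ 2 ≤ g x₀ y z ^ 2 +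
      ∫ t in Ioo (0:ℝ) L, |2 * (g t y z * gx t y z)| := by
    intro z hz
    refine ftc_bound (u := fun t => g t y z ^ 2)
      (u' := fun t => 2 * (g t y z * gx t y z)) ?_ ?_ hx hx₀
    · intro t ht
      have hd := (hder t ht y hy z hz).fun_pow 2
      simpa [pow_one, mul_comm, mul_assoc, mul_left_comm] using hd
    · exact continuousOn_const.mul ((cont_slice_x (W := g) hg hy hz).mul
        (cont_slice_x (W := gx) hgx hy hz))
  -- integrate in z
  have hcont_rhs : ContinuousOn (fun z => g x₀ y z ^ 2 +
      ∫ t in Ioo (0:ℝ) L, |2 * (g t y z * gx t y z)|) (Icc (-h) 0) := by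
    refine (cont_slice_z (W := fun a b c => g a b c ^ 2) hg2 hx₀ hy).add ?_
    refine contOn_param isCompact_Icc ?_
    have hmap : Continuous (fun q : ℝ × ℝ => ((q.2, y, q.1) : ℝ × ℝ × ℝ)) := by fun_prop
    exact hD.comp hmap.continuousOn (fun q hq => ⟨hq.2, hy, hq.1⟩)
  have hintz : (∫ z in Ioo (-h) (0:ℝ), g x y z ^ 2) ≤
      ∫ z in Ioo (-h) (0:ℝ), (g x₀ y z ^ 2 +
        ∫ t in Ioo (0:ℝ) L, |2 * (g t y z * gx t y z)|) :=
    setIntegral_mono_on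
      (integrableOn_Ioo (cont_slice_z (W := fun a b c => g a b c ^ 2) hg2 hx hy))
      (integrableOn_Ioo hcont_rhs) measurableSet_Ioo
      (fun z hz => hptz z (Ioo_subset_Icc_self hz))
  have hsplit : (∫ z in Ioo (-h) (0:ℝ), (g x₀ y z ^ 2 +
        ∫ t in Ioo (0:ℝ) L, |2 * (g t y z * gx t y z)|)) =
      (∫ z in Ioo (-h) (0:ℝ), g x₀ y z ^ 2) +
      ∫ z in Ioo (-h) (0:ℝ), ∫ t in Ioo (0:ℝ) L, |2 * (g t y z * gx t y z)| := by
    refine integral_add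
      (integrableOn_Ioo (cont_slice_z (W := fun a b c => g a b c ^ 2) hg2 hx₀ hy)) ?_
    refine integrableOn_Ioo ?_
    refine contOn_param isCompact_Icc ?_
    have hmap : Continuous (fun q : ℝ × ℝ => ((q.2, y, q.1) : ℝ × ℝ × ℝ)) := by fun_prop
    exact hD.comp hmap.continuousOn (fun q hq => ⟨hq.2, hy, hq.1⟩)
  have hswap : (∫ z in Ioo (-h) (0:ℝ), ∫ t in Ioo (0:ℝ) L, |2 * (g t y z * gx t y z)|) =
      ∫ t in Ioo (0:ℝ) L, ∫ z in Ioo (-h) (0:ℝ), |2 * (g t y z * gx t y z)| := by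
    refine swap_Ioo (F := fun z t => |2 * (g t y z * gx t y z)|) ?_
    have hmap : Continuous (fun q : ℝ × ℝ => ((q.2, y, q.1) : ℝ × ℝ × ℝ)) := by fun_prop
    exact hD.comp hmap.continuousOn (fun q hq => ⟨hq.2, hy, hq.1⟩)
  calc (∫ z in Ioo (-h) (0:ℝ), g x y z ^ 2) ≤ _ := hintz
    _ = (∫ z in Ioo (-h) (0:ℝ), g x₀ y z ^ 2) +
        ∫ t in Ioo (0:ℝ) L, ∫ z in Ioo (-h) (0:ℝ), |2 * (g t y z * gx t y z)| := by
          rw [hsplit, hswap]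
    _ ≤ _ := add_le_add_left havg _


/-- The main anisotropic estimate in raw form. -/
lemma main_est {L h : ℝ} (hL : 0 < L) {g gx gy : ℝ → ℝ → ℝ → ℝ}
    (hg : ContinuousOn (fun p : ℝ × ℝ × ℝ => g p.1 p.2.1 p.2.2) (Box L h))
    (hgx : ContinuousOn (fun p : ℝ × ℝ × ℝ => gx p.1 p.2.1 p.2.2) (Box L h))
    (hgy : ContinuousOn (fun p : ℝ × ℝ × ℝ => gy p.1 p.2.1 p.2.2) (Box L h))
    (hderx : ∀ x ∈ Icc (0:ℝ) L, ∀ y ∈ Icc (0:ℝ) L, ∀ z ∈ Icc (-h) (0:ℝ),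
        HasDerivAt (fun t => g t y z) (gx x y z) x)
    (hdery : ∀ x ∈ Icc (0:ℝ) L, ∀ y ∈ Icc (0:ℝ) L, ∀ z ∈ Icc (-h) (0:ℝ),
        HasDerivAt (fun t => g x t z) (gy x y z) y)
    (N : ℝ) (hN0 : 0 ≤ N)
    (hE : (∫ x in Ioo (0:ℝ) L, ∫ y in Ioo (0:ℝ) L, ∫ z in Ioo (-h) (0:ℝ), g x y z ^ 2) ≤ N ^ 2)
    (hEx : (∫ x in Ioo (0:ℝ) L, ∫ y in Ioo (0:ℝ) L, ∫ z in Ioo (-h) (0:ℝ), gx x y z ^ 2) ≤ N ^ 2)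
    (hEy : (∫ x in Ioo (0:ℝ) L, ∫ y in Ioo (0:ℝ) L, ∫ z in Ioo (-h) (0:ℝ), gy x y z ^ 2) ≤ N ^ 2) :
    (∫ x in Ioo (0:ℝ) L, ∫ y in Ioo (0:ℝ) L,
        (∫ z in Ioo (-h) (0:ℝ), g x y z ^ 2) ^ ((4:ℝ)/3)) ≤
      (∫ x in Ioo (0:ℝ) L, ∫ y in Ioo (0:ℝ) L, ∫ z in Ioo (-h) (0:ℝ), g x y z ^ 2) ^ ((2:ℝ)/3) *
      ((L⁻¹ + 2) ^ 2 *
        ((∫ x in Ioo (0:ℝ) L, ∫ y in Ioo (0:ℝ) L, ∫ z in Ioo (-h) (0:ℝ), g x y z ^ 2) * N ^ 2))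
        ^ ((1:ℝ)/3) := by
  have hIccL : (0:ℝ) ∈ Icc (0:ℝ) L := ⟨le_refl _, hL.le⟩
  have hg2 : ContinuousOn (fun p : ℝ × ℝ × ℝ => g p.1 p.2.1 p.2.2 ^ 2) (Box L h) := hg.pow 2
  -- the 2D function H
  have hHc : ContinuousOn
      (fun p : ℝ × ℝ => ∫ z in Ioo (-h) (0:ℝ), g p.1 p.2 z ^ 2) (Icc 0 L ×ˢ Icc 0 L) :=
    cont_int_z (W := fun a b c => g a b c ^ 2) hg2
  have hH0 : ∀ x y, 0 ≤ ∫ z in Ioo (-h) (0:ℝ), g x y z ^ 2 :=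
    fun x y => integral_nonneg (fun z => sq_nonneg _)
  set E : ℝ := ∫ x in Ioo (0:ℝ) L, ∫ y in Ioo (0:ℝ) L, ∫ z in Ioo (-h) (0:ℝ), g x y z ^ 2
    with hEdef
  have hE0 : 0 ≤ E :=
    integral_nonneg (fun x => integral_nonneg (fun y => hH0 x y))
  -- step 1 : Hölder interpolation
  have step1 := holder2d (L := L)
    (H := fun a b => ∫ z in Ioo (-h) (0:ℝ), g a b z ^ 2) hHc hH0
  -- the directional majorants
  set ay : ℝ → ℝ := fun y => L⁻¹ * (∫ t in Ioo (0:ℝ) L, ∫ z in Ioo (-h) (0:ℝ), g t y z ^ 2) +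
      ∫ t in Ioo (0:ℝ) L, ∫ z in Ioo (-h) (0:ℝ), |2 * (g t y z * gx t y z)| with haydef
  set bx : ℝ → ℝ := fun x => L⁻¹ * (∫ t in Ioo (0:ℝ) L, ∫ z in Ioo (-h) (0:ℝ), g x t z ^ 2) +
      ∫ t in Ioo (0:ℝ) L, ∫ z in Ioo (-h) (0:ℝ), |2 * (g x t z * gy x t z)| with hbxdef
  have hHa : ∀ y ∈ Icc (0:ℝ) L, ∀ x ∈ Icc (0:ℝ) L,
      (∫ z in Ioo (-h) (0:ℝ), g x y z ^ 2) ≤ ay y := fun y hy x hx =>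
    dir_bound hL hg hgx hderx hx hy
  have hHb : ∀ x ∈ Icc (0:ℝ) L, ∀ y ∈ Icc (0:ℝ) L,
      (∫ z in Ioo (-h) (0:ℝ), g x y z ^ 2) ≤ bx x := by
    intro x hx y hy
    exact dir_bound hL (cont_swapW (W := g) hg) (cont_swapW (W := gy) hgy)
      (fun a ha b hb z hz => hdery b hb a ha z hz) hy hx
  have hDxc : ContinuousOn
      (fun p : ℝ × ℝ × ℝ => |2 * (g p.1 p.2.1 p.2.2 * gx p.1 p.2.1 p.2.2)|) (Box L h) :=
    (continuousOn_const.mul (hg.mul hgx)).abs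
  have hDyc : ContinuousOn
      (fun p : ℝ × ℝ × ℝ => |2 * (g p.1 p.2.1 p.2.2 * gy p.1 p.2.1 p.2.2)|) (Box L h) :=
    (continuousOn_const.mul (hg.mul hgy)).abs
  have hay_cont : ContinuousOn ay (Icc 0 L) := by
    rw [haydef]
    exact (continuousOn_const.mul (cont_int_xz (W := fun a b c => g a b c ^ 2) hg2)).add
      (cont_int_xz (W := fun a b c => |2 * (g a b c * gx a b c)|) hDxc)
  have hbx_cont : ContinuousOn bx (Icc 0 L) := by
    rw [hbxdef]
    exact (continuousOn_const.mul (cont_int_yz (W := fun a b c => g a b c ^ 2) hg2)).add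
      (cont_int_yz (W := fun a b c => |2 * (g a b c * gy a b c)|) hDyc)
  have hay0 : ∀ y, 0 ≤ ay y := by
    intro y
    refine add_nonneg (mul_nonneg (inv_nonneg.mpr hL.le) ?_) ?_
    · exact integral_nonneg (fun t => hH0 t y)
    · exact integral_nonneg (fun t => integral_nonneg (fun z => abs_nonneg _))
  have hbx0 : ∀ x, 0 ≤ bx x := by
    intro x
    refine add_nonneg (mul_nonneg (inv_nonneg.mpr hL.le) ?_) ?_
    · exact integral_nonneg (fun t => hH0 x t)
    · exact integral_nonneg (fun t => integral_nonneg (fun z => abs_nonneg _))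
  -- step 2: J ≤ (∫ bx) * (∫ ay)
  set Aval : ℝ := ∫ y in Ioo (0:ℝ) L, ay y with hAdef
  set Bval : ℝ := ∫ x in Ioo (0:ℝ) L, bx x with hBdef
  have hAval0 : 0 ≤ Aval := integral_nonneg (fun y => hay0 y)
  have step2 : (∫ x in Ioo (0:ℝ) L, ∫ y in Ioo (0:ℝ) L,
      (∫ z in Ioo (-h) (0:ℝ), g x y z ^ 2) ^ 2) ≤ Bval * Aval := by
    have inner : ∀ x ∈ Icc (0:ℝ) L,
        (∫ y in Ioo (0:ℝ) L, (∫ z in Ioo (-h) (0:ℝ), g x y z ^ 2) ^ 2) ≤ bx x * Aval := by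
      intro x hx
      have hmono : (∫ y in Ioo (0:ℝ) L, (∫ z in Ioo (-h) (0:ℝ), g x y z ^ 2) ^ 2) ≤
          ∫ y in Ioo (0:ℝ) L, bx x * ay y := by
        refine setIntegral_mono_on
          (integrableOn_Ioo ((cont2_slice_right
            (F := fun a b => ∫ z in Ioo (-h) (0:ℝ), g a b z ^ 2) hHc hx).pow 2))
          (integrableOn_Ioo (continuousOn_const.mul hay_cont)) measurableSet_Ioo ?_
        intro y hy
        have hyI := Ioo_subset_Icc_self hy
        rw [pow_two]
        exact mul_le_mul (hHb x hx y hyI) (hHa y hyI x hx) (hH0 x y) (hbx0 x)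
      rw [integral_const_mul] at hmono
      exact hmono
    have houter : (∫ x in Ioo (0:ℝ) L, ∫ y in Ioo (0:ℝ) L,
        (∫ z in Ioo (-h) (0:ℝ), g x y z ^ 2) ^ 2) ≤ ∫ x in Ioo (0:ℝ) L, bx x * Aval := by
      refine setIntegral_mono_on
        (integrableOn_Ioo (contOn_param isCompact_Icc (hHc.pow 2)))
        (integrableOn_Ioo (hbx_cont.mul continuousOn_const)) measurableSet_Ioo ?_
      intro x hx
      exact inner x (Ioo_subset_Icc_self hx)
    rwa [integral_mul_const] at houter
  -- step 3: bounds for Aval and Bval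
  have habs2 : ∀ a b : ℝ, |2 * (a * b)| = 2 * (|a| * |b|) := by
    intro a b
    rw [abs_mul, abs_mul, abs_two]
  have sqrtE_le : Real.sqrt E ≤ N :=
    (Real.sqrt_le_sqrt hE).trans_eq (Real.sqrt_sq hN0)
  have sqrtE0 : 0 ≤ Real.sqrt E := Real.sqrt_nonneg _
  have hEeq : Real.sqrt E * Real.sqrt E = E := Real.mul_self_sqrt hE0
  have hAbound : Aval ≤ (L⁻¹ + 2) * (Real.sqrt E * N) := by
    have hsplit : Aval = L⁻¹ * (∫ y in Ioo (0:ℝ) L, ∫ t in Ioo (0:ℝ) L,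
        ∫ z in Ioo (-h) (0:ℝ), g t y z ^ 2) +
        ∫ y in Ioo (0:ℝ) L, ∫ t in Ioo (0:ℝ) L,
          ∫ z in Ioo (-h) (0:ℝ), |2 * (g t y z * gx t y z)| := by
      rw [hAdef, haydef]
      rw [integral_add (integrableOn_Ioo (continuousOn_const.fun_mul
          (cont_int_xz (W := fun a b c => g a b c ^ 2) hg2)))
          (integrableOn_Ioo (cont_int_xz
            (W := fun a b c => |2 * (g a b c * gx a b c)|) hDxc)),
        integral_const_mul]
    have hswapE : (∫ y in Ioo (0:ℝ) L, ∫ t in Ioo (0:ℝ) L,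
        ∫ z in Ioo (-h) (0:ℝ), g t y z ^ 2) = E := by
      rw [hEdef]
      exact swap_Ioo (F := fun b a => ∫ z in Ioo (-h) (0:ℝ), g a b z ^ 2)
        (cont_int_z (W := fun a b c => g b a c ^ 2) ((cont_swapW (W := g) hg).pow 2))
    have hswapEx : (∫ y in Ioo (0:ℝ) L, ∫ t in Ioo (0:ℝ) L,
        ∫ z in Ioo (-h) (0:ℝ), gx t y z ^ 2) =
        ∫ x in Ioo (0:ℝ) L, ∫ y in Ioo (0:ℝ) L, ∫ z in Ioo (-h) (0:ℝ), gx x y z ^ 2 :=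
      swap_Ioo (F := fun b a => ∫ z in Ioo (-h) (0:ℝ), gx a b z ^ 2)
        (cont_int_z (W := fun a b c => gx b a c ^ 2) ((cont_swapW (W := gx) hgx).pow 2))
    have hcs := cs3 (L := L) (h := h) (u := fun a b c => g b a c) (v := fun a b c => gx b a c)
      (cont_swapW (W := g) hg) (cont_swapW (W := gx) hgx)
    rw [hswapE, hswapEx] at hcs
    have sqrtEx_le : Real.sqrt (∫ x in Ioo (0:ℝ) L, ∫ y in Ioo (0:ℝ) L,
        ∫ z in Ioo (-h) (0:ℝ), gx x y z ^ 2) ≤ N :=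
      (Real.sqrt_le_sqrt hEx).trans_eq (Real.sqrt_sq hN0)
    have hT : (∫ y in Ioo (0:ℝ) L, ∫ t in Ioo (0:ℝ) L,
        ∫ z in Ioo (-h) (0:ℝ), |2 * (g t y z * gx t y z)|) ≤ 2 * (Real.sqrt E * N) := by
      have e1 : (∫ y in Ioo (0:ℝ) L, ∫ t in Ioo (0:ℝ) L,
          ∫ z in Ioo (-h) (0:ℝ), |2 * (g t y z * gx t y z)|) =
          2 * ∫ y in Ioo (0:ℝ) L, ∫ t in Ioo (0:ℝ) L,
            ∫ z in Ioo (-h) (0:ℝ), |g t y z| * |gx t y z| := by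
        simp only [habs2, integral_const_mul]
      rw [e1]
      refine mul_le_mul_of_nonneg_left ?_ (by norm_num)
      refine hcs.trans ?_
      exact mul_le_mul_of_nonneg_left sqrtEx_le sqrtE0
    have t1 : L⁻¹ * E ≤ L⁻¹ * (Real.sqrt E * N) := by
      refine mul_le_mul_of_nonneg_left ?_ (inv_nonneg.mpr hL.le)
      nlinarith [sqrtE_le, sqrtE0, hEeq]
    rw [hsplit, hswapE]
    linarith [t1, hT]
  have hBbound : Bval ≤ (L⁻¹ + 2) * (Real.sqrt E * N) := by
    have hsplit : Bval = L⁻¹ * E +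
        ∫ x in Ioo (0:ℝ) L, ∫ t in Ioo (0:ℝ) L,
          ∫ z in Ioo (-h) (0:ℝ), |2 * (g x t z * gy x t z)| := by
      rw [hBdef, hbxdef, hEdef]
      rw [integral_add (integrableOn_Ioo (continuousOn_const.fun_mul
          (cont_int_yz (W := fun a b c => g a b c ^ 2) hg2)))
          (integrableOn_Ioo (cont_int_yz
            (W := fun a b c => |2 * (g a b c * gy a b c)|) hDyc)),
        integral_const_mul]
    have hcs := cs3 (L := L) (h := h) (u := g) (v := gy) hg hgy
    rw [← hEdef] at hcs
    have sqrtEy_le : Real.sqrt (∫ x in Ioo (0:ℝ) L, ∫ y in Ioo (0:ℝ) L,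
        ∫ z in Ioo (-h) (0:ℝ), gy x y z ^ 2) ≤ N :=
      (Real.sqrt_le_sqrt hEy).trans_eq (Real.sqrt_sq hN0)
    have hT : (∫ x in Ioo (0:ℝ) L, ∫ t in Ioo (0:ℝ) L,
        ∫ z in Ioo (-h) (0:ℝ), |2 * (g x t z * gy x t z)|) ≤ 2 * (Real.sqrt E * N) := by
      have e1 : (∫ x in Ioo (0:ℝ) L, ∫ t in Ioo (0:ℝ) L,
          ∫ z in Ioo (-h) (0:ℝ), |2 * (g x t z * gy x t z)|) =
          2 * ∫ x in Ioo (0:ℝ) L, ∫ t in Ioo (0:ℝ) L,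
            ∫ z in Ioo (-h) (0:ℝ), |g x t z| * |gy x t z| := by
        simp only [habs2, integral_const_mul]
      rw [e1]
      refine mul_le_mul_of_nonneg_left ?_ (by norm_num)
      refine hcs.trans ?_
      exact mul_le_mul_of_nonneg_left sqrtEy_le sqrtE0
    have t1 : L⁻¹ * E ≤ L⁻¹ * (Real.sqrt E * N) := by
      refine mul_le_mul_of_nonneg_left ?_ (inv_nonneg.mpr hL.le)
      nlinarith [sqrtE_le, sqrtE0, hEeq]
    rw [hsplit]
    linarith [t1, hT]
  -- combine
  have hJ : (∫ x in Ioo (0:ℝ) L, ∫ y in Ioo (0:ℝ) L,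
      (∫ z in Ioo (-h) (0:ℝ), g x y z ^ 2) ^ 2) ≤ (L⁻¹ + 2) ^ 2 * (E * N ^ 2) := by
    have hc1 : (0:ℝ) ≤ (L⁻¹ + 2) * (Real.sqrt E * N) := by positivity
    have h2 := step2.trans (mul_le_mul hBbound hAbound hAval0 hc1)
    have e2 : ((L⁻¹ + 2) * (Real.sqrt E * N)) * ((L⁻¹ + 2) * (Real.sqrt E * N)) =
        (L⁻¹ + 2) ^ 2 * ((Real.sqrt E * Real.sqrt E) * N ^ 2) := by ring
    rw [e2, hEeq] at h2
    exact h2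
  have hJ0 : (0:ℝ) ≤ ∫ x in Ioo (0:ℝ) L, ∫ y in Ioo (0:ℝ) L,
      (∫ z in Ioo (-h) (0:ℝ), g x y z ^ 2) ^ 2 :=
    integral_nonneg (fun x => integral_nonneg (fun y => sq_nonneg _))
  refine step1.trans ?_
  refine mul_le_mul_of_nonneg_left ?_ (Real.rpow_nonneg hE0 _)
  exact Real.rpow_le_rpow hJ0 hJ (by norm_num)

end Stmt4Aux

/-- The domain `M = (0,L) × (0,L) × (-h,0) ⊆ ℝ³`. -/
def Mset (L h : ℝ) : Set (ℝ × ℝ × ℝ) := Ioo 0 L ×ˢ Ioo 0 L ×ˢ Ioo (-h) 0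

/-- `f` is smooth on an open neighbourhood of the closure of `M`. -/
def SmoothNearM (L h : ℝ) (f : ℝ → ℝ → ℝ → ℝ) : Prop :=
  ∃ U : Set (ℝ × ℝ × ℝ), IsOpen U ∧ closure (Mset L h) ⊆ U ∧
    ContDiffOn ℝ (⊤ : ℕ∞) (fun p : ℝ × ℝ × ℝ => f p.1 p.2.1 p.2.2) U

/-- Partial derivative in `x`. -/
def pdx (f : ℝ → ℝ → ℝ → ℝ) : ℝ → ℝ → ℝ → ℝ := fun x y z => deriv (fun t => f t y z) x
/-- Partial derivative in `y`. -/
def pdy (f : ℝ → ℝ → ℝ → ℝ) : ℝ → ℝ → ℝ → ℝ := fun x y z => deriv (fun t => f x t z) y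
/-- Partial derivative in `z`. -/
def pdz (f : ℝ → ℝ → ℝ → ℝ) : ℝ → ℝ → ℝ → ℝ := fun x y z => deriv (fun t => f x y t) z

/-- Iterated integral over `M`. -/
def intM (L h : ℝ) (g : ℝ → ℝ → ℝ → ℝ) : ℝ :=
  ∫ x in Ioo (0:ℝ) L, ∫ y in Ioo (0:ℝ) L, ∫ z in Ioo (-h) (0:ℝ), g x y z

/-- Square of the `L²(M)` norm. -/
def sqL2 (L h : ℝ) (f : ℝ → ℝ → ℝ → ℝ) : ℝ := intM L h fun x y z => (f x y z) ^ 2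

/-- The `L²(M)` norm `|f|`. -/
def L2norm (L h : ℝ) (f : ℝ → ℝ → ℝ → ℝ) : ℝ := Real.sqrt (sqL2 L h f)

/-- The `L^p(M)` norm. -/
def LpNorm (L h p : ℝ) (f : ℝ → ℝ → ℝ → ℝ) : ℝ :=
  (intM L h fun x y z => |f x y z| ^ p) ^ (1 / p)

/-- Square of the `L²(M)` norm of the full (three-dimensional) gradient. -/
def gradSq (L h : ℝ) (f : ℝ → ℝ → ℝ → ℝ) : ℝ :=
  sqL2 L h (pdx f) + sqL2 L h (pdy f) + sqL2 L h (pdz f)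

/-- The `L²(M)` norm of the full (three-dimensional) gradient `|∇₃ f|_{L²}`. -/
def gradL2 (L h : ℝ) (f : ℝ → ℝ → ℝ → ℝ) : ℝ := Real.sqrt (gradSq L h f)

/-- The `H¹(M)` norm `‖f‖ = (|f|² + |∇₃ f|²)^{1/2}`. -/
def H1norm (L h : ℝ) (f : ℝ → ℝ → ℝ → ℝ) : ℝ :=
  Real.sqrt (sqL2 L h f + gradSq L h f)

/-- The anisotropic norm `|f|_{L^q_x L^p_z}`. -/
def anisoNorm (L h q p : ℝ) (f : ℝ → ℝ → ℝ → ℝ) : ℝ :=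
  (∫ x in Ioo (0:ℝ) L, ∫ y in Ioo (0:ℝ) L,
    (∫ z in Ioo (-h) (0:ℝ), |f x y z| ^ p) ^ (q / p)) ^ (1 / q)

namespace Stmt4Aux

/-- Continuity and derivative facts for the cube of a smooth function. -/
lemma gfacts {L h : ℝ} (hL : 0 < L) (hh : 0 < h) {f : ℝ → ℝ → ℝ → ℝ}
    (hf : SmoothNearM L h f) :
    ContinuousOn (fun p : ℝ × ℝ × ℝ => f p.1 p.2.1 p.2.2 ^ 3) (Box L h) ∧
    ContinuousOn (fun p : ℝ × ℝ × ℝ =>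
      pdx (fun x y z => f x y z ^ 3) p.1 p.2.1 p.2.2) (Box L h) ∧
    ContinuousOn (fun p : ℝ × ℝ × ℝ =>
      pdy (fun x y z => f x y z ^ 3) p.1 p.2.1 p.2.2) (Box L h) ∧
    (∀ x ∈ Icc (0:ℝ) L, ∀ y ∈ Icc (0:ℝ) L, ∀ z ∈ Icc (-h) (0:ℝ),
      HasDerivAt (fun t => f t y z ^ 3) (pdx (fun x y z => f x y z ^ 3) x y z) x) ∧
    (∀ x ∈ Icc (0:ℝ) L, ∀ y ∈ Icc (0:ℝ) L, ∀ z ∈ Icc (-h) (0:ℝ),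
      HasDerivAt (fun t => f x t z ^ 3) (pdy (fun x y z => f x y z ^ 3) x y z) y) := by
  obtain ⟨U, hUo, hUc, hsm⟩ := hf
  have hbox : Box L h ⊆ U := by
    have hcl : closure (Mset L h) = Box L h := by
      unfold Mset Box
      rw [closure_prod_eq, closure_prod_eq, closure_Ioo hL.ne,
        closure_Ioo (show -h ≠ 0 by linarith)]
    rw [hcl] at hUc
    exact hUc
  set G : ℝ × ℝ × ℝ → ℝ := fun p => f p.1 p.2.1 p.2.2 ^ 3 with hGdef
  have hGsm : ContDiffOn ℝ (⊤:ℕ∞) G U := hsm.pow 3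
  have hGc : ContinuousOn (fun p : ℝ × ℝ × ℝ => f p.1 p.2.1 p.2.2 ^ 3) (Box L h) :=
    (hGsm.continuousOn).mono hbox
  have hGdiff : ∀ p ∈ U, DifferentiableAt ℝ G p := fun p hp =>
    (hGsm.differentiableOn (by simp)).differentiableAt (hUo.mem_nhds hp)
  have hfderc : ContinuousOn (fderiv ℝ G) U :=
    hGsm.continuousOn_fderiv_of_isOpen hUo (by exact_mod_cast le_top)
  -- x-direction
  have hdx : ∀ p ∈ U, HasDerivAt (fun t => f t p.2.1 p.2.2 ^ 3)
      (fderiv ℝ G p ((1, 0, 0) : ℝ × ℝ × ℝ)) p.1 := by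
    intro p hp
    have hcurve : HasDerivAt (fun t : ℝ => ((t, p.2.1, p.2.2) : ℝ × ℝ × ℝ))
        ((1, 0, 0) : ℝ × ℝ × ℝ) p.1 :=
      (hasDerivAt_id p.1).prodMk (hasDerivAt_const p.1 _)
    exact ((hGdiff p hp).hasFDerivAt).comp_hasDerivAt p.1 hcurve
  have hpdx_eq : ∀ p ∈ U, pdx (fun x y z => f x y z ^ 3) p.1 p.2.1 p.2.2 =
      fderiv ℝ G p ((1, 0, 0) : ℝ × ℝ × ℝ) := fun p hp => (hdx p hp).deriv
  have hcpdx : ContinuousOn (fun p : ℝ × ℝ × ℝ =>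
      pdx (fun x y z => f x y z ^ 3) p.1 p.2.1 p.2.2) (Box L h) := by
    have h1 : ContinuousOn (fun p => fderiv ℝ G p ((1, 0, 0) : ℝ × ℝ × ℝ)) U :=
      hfderc.clm_apply continuousOn_const
    exact (h1.mono hbox).congr (fun p hp => hpdx_eq p (hbox hp))
  have hderx : ∀ x ∈ Icc (0:ℝ) L, ∀ y ∈ Icc (0:ℝ) L, ∀ z ∈ Icc (-h) (0:ℝ),
      HasDerivAt (fun t => f t y z ^ 3) (pdx (fun x y z => f x y z ^ 3) x y z) x := by
    intro x hx y hy z hz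
    have hp : ((x, y, z) : ℝ × ℝ × ℝ) ∈ U := hbox ⟨hx, hy, hz⟩
    have h1 := hdx (x, y, z) hp
    rwa [← hpdx_eq (x, y, z) hp] at h1
  -- y-direction
  have hdy : ∀ p ∈ U, HasDerivAt (fun t => f p.1 t p.2.2 ^ 3)
      (fderiv ℝ G p ((0, 1, 0) : ℝ × ℝ × ℝ)) p.2.1 := by
    intro p hp
    have hcurve : HasDerivAt (fun t : ℝ => ((p.1, t, p.2.2) : ℝ × ℝ × ℝ))
        ((0, 1, 0) : ℝ × ℝ × ℝ) p.2.1 :=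
      (hasDerivAt_const p.2.1 p.1).prodMk ((hasDerivAt_id p.2.1).prodMk (hasDerivAt_const p.2.1 p.2.2))
    exact ((hGdiff p hp).hasFDerivAt).comp_hasDerivAt p.2.1 hcurve
  have hpdy_eq : ∀ p ∈ U, pdy (fun x y z => f x y z ^ 3) p.1 p.2.1 p.2.2 =
      fderiv ℝ G p ((0, 1, 0) : ℝ × ℝ × ℝ) := fun p hp => (hdy p hp).deriv
  have hcpdy : ContinuousOn (fun p : ℝ × ℝ × ℝ =>
      pdy (fun x y z => f x y z ^ 3) p.1 p.2.1 p.2.2) (Box L h) := by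
    have h1 : ContinuousOn (fun p => fderiv ℝ G p ((0, 1, 0) : ℝ × ℝ × ℝ)) U :=
      hfderc.clm_apply continuousOn_const
    exact (h1.mono hbox).congr (fun p hp => hpdy_eq p (hbox hp))
  have hdery : ∀ x ∈ Icc (0:ℝ) L, ∀ y ∈ Icc (0:ℝ) L, ∀ z ∈ Icc (-h) (0:ℝ),
      HasDerivAt (fun t => f x t z ^ 3) (pdy (fun x y z => f x y z ^ 3) x y z) y := by
    intro x hx y hy z hz
    have hp : ((x, y, z) : ℝ × ℝ × ℝ) ∈ U := hbox ⟨hx, hy, hz⟩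
    have h1 := hdy (x, y, z) hp
    rwa [← hpdy_eq (x, y, z) hp] at h1
  exact ⟨hGc, hcpdx, hcpdy, hderx, hdery⟩

/-- `rpow` bookkeeping for the final step. -/
lemma rpow_package {c E N : ℝ} (hc : 0 ≤ c) (hE : 0 ≤ E) (hN : 0 ≤ N) :
    (E ^ ((2:ℝ)/3) * (c * (E * N ^ 2)) ^ ((1:ℝ)/3)) ^ ((1:ℝ)/4) =
      c ^ ((1:ℝ)/12) * (E ^ ((1:ℝ)/6)) ^ ((3:ℝ)/2) * N ^ ((1:ℝ)/6) := by
  have h1 : (c * (E * N ^ 2)) ^ ((1:ℝ)/3) =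
      c ^ ((1:ℝ)/3) * (E ^ ((1:ℝ)/3) * (N ^ 2 : ℝ) ^ ((1:ℝ)/3)) := by
    rw [Real.mul_rpow hc (by positivity), Real.mul_rpow hE (by positivity)]
  have h2 : ((N ^ 2 : ℝ)) ^ ((1:ℝ)/3) = N ^ ((2:ℝ)/3) := by
    rw [← Real.rpow_natCast N 2, ← Real.rpow_mul hN]
    norm_num
  have h4 : E ^ ((2:ℝ)/3) * E ^ ((1:ℝ)/3) = E := by
    rw [← Real.rpow_add' hE (by norm_num)]
    norm_num
  have h5 : E ^ ((2:ℝ)/3) * (c ^ ((1:ℝ)/3) * (E ^ ((1:ℝ)/3) * N ^ ((2:ℝ)/3))) =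
      c ^ ((1:ℝ)/3) * (E * N ^ ((2:ℝ)/3)) := by
    rw [show E ^ ((2:ℝ)/3) * (c ^ ((1:ℝ)/3) * (E ^ ((1:ℝ)/3) * N ^ ((2:ℝ)/3))) =
      c ^ ((1:ℝ)/3) * ((E ^ ((2:ℝ)/3) * E ^ ((1:ℝ)/3)) * N ^ ((2:ℝ)/3)) from by ring, h4]
  rw [h1, h2, h5]
  rw [Real.mul_rpow (by positivity) (by positivity),
    Real.mul_rpow hE (by positivity)]
  rw [← Real.rpow_mul hc, ← Real.rpow_mul hN, ← Real.rpow_mul hE]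
  norm_num
  ring

end Stmt4Aux

open Stmt4Aux in
/-- anisotropic estimate \eqref{eq:anis.5}:
there is `C > 0`, depending only on `M`, with
`|f²|_{L⁴_x L³_z} ≤ C |f|_{L⁶}^{3/2} ‖f³‖^{1/6}` for all `f` smooth near the closure of `M`. -/
theorem stmt4 (L h : ℝ) (hL : 0 < L) (hh : 0 < h) :
    ∃ C : ℝ, 0 < C ∧
      ∀ f : ℝ → ℝ → ℝ → ℝ, SmoothNearM L h f →
        anisoNorm L h 4 3 (fun x y z => (f x y z) ^ 2) ≤
          C * LpNorm L h 6 f ^ ((3:ℝ) / 2) *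
            H1norm L h (fun x y z => (f x y z) ^ 3) ^ ((1:ℝ) / 6) := by
  refine ⟨((L⁻¹ + 2) ^ 2) ^ ((1:ℝ)/12), by positivity, ?_⟩
  intro f hf
  obtain ⟨hgc, hgxc, hgyc, hderx, hdery⟩ := gfacts hL hh hf
  have sq_nn : ∀ w : ℝ → ℝ → ℝ → ℝ, 0 ≤ sqL2 L h w := fun w =>
    integral_nonneg (fun x => integral_nonneg (fun y => integral_nonneg (fun z => sq_nonneg _)))
  have hS0 : 0 ≤ sqL2 L h (fun x y z => f x y z ^ 3) +
      gradSq L h (fun x y z => f x y z ^ 3) := by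
    have := sq_nn (fun x y z => f x y z ^ 3)
    have h1 := sq_nn (pdx fun x y z => f x y z ^ 3)
    have h2 := sq_nn (pdy fun x y z => f x y z ^ 3)
    have h3 := sq_nn (pdz fun x y z => f x y z ^ 3)
    unfold gradSq
    linarith
  set N : ℝ := H1norm L h (fun x y z => f x y z ^ 3) with hNdef
  have hN0 : 0 ≤ N := Real.sqrt_nonneg _
  have hNsq : N ^ 2 = sqL2 L h (fun x y z => f x y z ^ 3) +
      gradSq L h (fun x y z => f x y z ^ 3) := Real.sq_sqrt hS0
  -- identify the three energies
  have hE : (∫ x in Ioo (0:ℝ) L, ∫ y in Ioo (0:ℝ) L, ∫ z in Ioo (-h) (0:ℝ),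
      (f x y z ^ 3) ^ 2) ≤ N ^ 2 := by
    rw [hNsq]
    have h1 := sq_nn (pdx fun x y z => f x y z ^ 3)
    have h2 := sq_nn (pdy fun x y z => f x y z ^ 3)
    have h3 := sq_nn (pdz fun x y z => f x y z ^ 3)
    have e1 : sqL2 L h (fun x y z => f x y z ^ 3) =
        ∫ x in Ioo (0:ℝ) L, ∫ y in Ioo (0:ℝ) L, ∫ z in Ioo (-h) (0:ℝ),
          (f x y z ^ 3) ^ 2 := rfl
    unfold gradSq
    linarith [e1.ge]
  have hEx : (∫ x in Ioo (0:ℝ) L, ∫ y in Ioo (0:ℝ) L, ∫ z in Ioo (-h) (0:ℝ),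
      pdx (fun x y z => f x y z ^ 3) x y z ^ 2) ≤ N ^ 2 := by
    rw [hNsq]
    have h0 := sq_nn (fun x y z => f x y z ^ 3)
    have h2 := sq_nn (pdy fun x y z => f x y z ^ 3)
    have h3 := sq_nn (pdz fun x y z => f x y z ^ 3)
    have e1 : sqL2 L h (pdx fun x y z => f x y z ^ 3) =
        ∫ x in Ioo (0:ℝ) L, ∫ y in Ioo (0:ℝ) L, ∫ z in Ioo (-h) (0:ℝ),
          pdx (fun x y z => f x y z ^ 3) x y z ^ 2 := rfl
    unfold gradSq
    linarith [e1.ge]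
  have hEy : (∫ x in Ioo (0:ℝ) L, ∫ y in Ioo (0:ℝ) L, ∫ z in Ioo (-h) (0:ℝ),
      pdy (fun x y z => f x y z ^ 3) x y z ^ 2) ≤ N ^ 2 := by
    rw [hNsq]
    have h0 := sq_nn (fun x y z => f x y z ^ 3)
    have h1 := sq_nn (pdx fun x y z => f x y z ^ 3)
    have h3 := sq_nn (pdz fun x y z => f x y z ^ 3)
    have e1 : sqL2 L h (pdy fun x y z => f x y z ^ 3) =
        ∫ x in Ioo (0:ℝ) L, ∫ y in Ioo (0:ℝ) L, ∫ z in Ioo (-h) (0:ℝ),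
          pdy (fun x y z => f x y z ^ 3) x y z ^ 2 := rfl
    unfold gradSq
    linarith [e1.ge]
  have main := main_est hL (g := fun x y z => f x y z ^ 3)
    (gx := pdx (fun x y z => f x y z ^ 3)) (gy := pdy (fun x y z => f x y z ^ 3))
    hgc hgxc hgyc hderx hdery N hN0 hE hEx hEy
  -- rewrite the goal
  have eptw : ∀ w : ℝ, |w ^ 2| ^ (3:ℝ) = (w ^ 3) ^ 2 := fun w => by
    rw [abs_of_nonneg (sq_nonneg w), show (3:ℝ) = ((3:ℕ):ℝ) by norm_num,
      Real.rpow_natCast]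
    ring
  have eptw6 : ∀ w : ℝ, |w| ^ (6:ℝ) = (w ^ 3) ^ 2 := fun w => by
    rw [show (6:ℝ) = ((6:ℕ):ℝ) by norm_num, Real.rpow_natCast, pow_abs,
      abs_of_nonneg (by positivity : (0:ℝ) ≤ w ^ 6)]
    ring
  have hE0 : 0 ≤ ∫ x in Ioo (0:ℝ) L, ∫ y in Ioo (0:ℝ) L, ∫ z in Ioo (-h) (0:ℝ),
      (f x y z ^ 3) ^ 2 :=
    integral_nonneg (fun x => integral_nonneg (fun y =>
      integral_nonneg (fun z => sq_nonneg _)))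
  have hLp : LpNorm L h 6 f = (∫ x in Ioo (0:ℝ) L, ∫ y in Ioo (0:ℝ) L,
      ∫ z in Ioo (-h) (0:ℝ), (f x y z ^ 3) ^ 2) ^ ((1:ℝ)/6) := by
    unfold LpNorm intM
    simp only [eptw6]
  have hAniso : anisoNorm L h 4 3 (fun x y z => (f x y z) ^ 2) =
      (∫ x in Ioo (0:ℝ) L, ∫ y in Ioo (0:ℝ) L,
        (∫ z in Ioo (-h) (0:ℝ), (f x y z ^ 3) ^ 2) ^ ((4:ℝ)/3)) ^ ((1:ℝ)/4) := by
    unfold anisoNorm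
    simp only [eptw]
  rw [hAniso, hLp]
  have hI0 : 0 ≤ ∫ x in Ioo (0:ℝ) L, ∫ y in Ioo (0:ℝ) L,
      (∫ z in Ioo (-h) (0:ℝ), (f x y z ^ 3) ^ 2) ^ ((4:ℝ)/3) :=
    integral_nonneg (fun x => integral_nonneg (fun y =>
      Real.rpow_nonneg (integral_nonneg (fun z => sq_nonneg _)) _))
  have step := Real.rpow_le_rpow hI0 main (by norm_num : (0:ℝ) ≤ (1:ℝ)/4)
  refine step.trans ?_
  rw [rpow_package (by positivity) hE0 hN0]
end
end

section
/- There exists a constant C > 0, depending only on M, such that for every smooth function f on a neighbourhood of the closure of M one has |f|_{L^{12}_x L^6_z}^6 ≤ C (|f|_{L⁶}³ |∇₃(f³)|_{L²} + |f|_{L⁶}⁶), where f³ denotes the pointwise cube of f. -/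
open MeasureTheory Set

noncomputable section

lemma intg1 {a b : ℝ} {w : ℝ → ℝ} (hw : ContinuousOn w (Icc a b)) :
    Integrable w (volume.restrict (Ioo a b)) :=
  (hw.integrableOn_compact isCompact_Icc).mono_set Ioo_subset_Icc_self

lemma intg2 {a b c d : ℝ} {W : ℝ × ℝ → ℝ} (hW : ContinuousOn W (Icc a b ×ˢ Icc c d)) :
    Integrable W ((volume.restrict (Ioo a b)).prod (volume.restrict (Ioo c d))) := by
  rw [Measure.prod_restrict, ← Measure.volume_eq_prod]
  exact (hW.integrableOn_compact (isCompact_Icc.prod isCompact_Icc)).mono_set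
    (prod_mono Ioo_subset_Icc_self Ioo_subset_Icc_self)

lemma intg3 {a b c d e r : ℝ} {V : ℝ × ℝ × ℝ → ℝ}
    (hV : ContinuousOn V (Icc a b ×ˢ Icc c d ×ˢ Icc e r)) :
    Integrable V ((volume.restrict (Ioo a b)).prod
      ((volume.restrict (Ioo c d)).prod (volume.restrict (Ioo e r)))) := by
  rw [Measure.prod_restrict, Measure.prod_restrict, ← Measure.volume_eq_prod,
    ← Measure.volume_eq_prod]
  exact (hV.integrableOn_compact (isCompact_Icc.prod (isCompact_Icc.prod isCompact_Icc))).mono_set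
    (prod_mono Ioo_subset_Icc_self (prod_mono Ioo_subset_Icc_self Ioo_subset_Icc_self))

lemma intg3' {a b c d e r : ℝ} {V : (ℝ × ℝ) × ℝ → ℝ}
    (hV : ContinuousOn V ((Icc a b ×ˢ Icc c d) ×ˢ Icc e r)) :
    Integrable V (((volume.restrict (Ioo a b)).prod (volume.restrict (Ioo c d))).prod
      (volume.restrict (Ioo e r))) := by
  rw [Measure.prod_restrict, Measure.prod_restrict, ← Measure.volume_eq_prod,
    ← Measure.volume_eq_prod]
  exact (hV.integrableOn_compact ((isCompact_Icc.prod isCompact_Icc).prod isCompact_Icc)).mono_set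
    (prod_mono (prod_mono Ioo_subset_Icc_self Ioo_subset_Icc_self) Ioo_subset_Icc_self)

section Box
variable {L h : ℝ} {V : ℝ × ℝ × ℝ → ℝ}
  (hV : ContinuousOn V (Icc 0 L ×ˢ Icc 0 L ×ˢ Icc (-h) 0))

lemma sliceZ (hV : ContinuousOn V (Icc 0 L ×ˢ Icc 0 L ×ˢ Icc (-h) 0))
    {x y : ℝ} (hx : x ∈ Icc 0 L) (hy : y ∈ Icc 0 L) :
    Integrable (fun z => V (x, y, z)) (volume.restrict (Ioo (-h) 0)) :=
  intg1 (hV.comp (by fun_prop) (fun z hz => ⟨hx, hy, hz⟩))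

lemma sliceX (hV : ContinuousOn V (Icc 0 L ×ˢ Icc 0 L ×ˢ Icc (-h) 0))
    {y z : ℝ} (hy : y ∈ Icc 0 L) (hz : z ∈ Icc (-h) 0) :
    Integrable (fun x => V (x, y, z)) (volume.restrict (Ioo (0:ℝ) L)) :=
  intg1 (hV.comp (by fun_prop) (fun x hx => ⟨hx, hy, hz⟩))

lemma intgXZ (hV : ContinuousOn V (Icc 0 L ×ˢ Icc 0 L ×ˢ Icc (-h) 0))
    {y : ℝ} (hy : y ∈ Icc 0 L) :
    Integrable (fun q : ℝ × ℝ => V (q.1, y, q.2))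
      ((volume.restrict (Ioo (0:ℝ) L)).prod (volume.restrict (Ioo (-h) 0))) :=
  intg2 (hV.comp (by fun_prop) (fun q hq => ⟨hq.1, hy, hq.2⟩))

lemma intgYZ (hV : ContinuousOn V (Icc 0 L ×ˢ Icc 0 L ×ˢ Icc (-h) 0))
    {x : ℝ} (hx : x ∈ Icc 0 L) :
    Integrable (fun q : ℝ × ℝ => V (x, q.1, q.2))
      ((volume.restrict (Ioo (0:ℝ) L)).prod (volume.restrict (Ioo (-h) 0))) :=
  intg2 (hV.comp (by fun_prop) (fun q hq => ⟨hx, hq.1, hq.2⟩))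

/-- integrability in `y` of the double integral over `x, z`. -/
lemma intgYfun (hV : ContinuousOn V (Icc 0 L ×ˢ Icc 0 L ×ˢ Icc (-h) 0)) :
    Integrable (fun y => ∫ x in Ioo (0:ℝ) L, ∫ z in Ioo (-h) (0:ℝ), V (x, y, z))
      (volume.restrict (Ioo (0:ℝ) L)) := by
  have h1 : Integrable (fun q : ℝ × ℝ × ℝ => V (q.2.1, q.1, q.2.2))
      ((volume.restrict (Ioo (0:ℝ) L)).prod
        ((volume.restrict (Ioo (0:ℝ) L)).prod (volume.restrict (Ioo (-h) 0)))) :=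
    intg3 (hV.comp (by fun_prop) (fun q hq => ⟨hq.2.1, hq.1, hq.2.2⟩))
  have h2 := h1.integral_prod_left
  refine h2.congr ?_
  refine (ae_restrict_mem measurableSet_Ioo).mono fun y hy => ?_
  exact integral_prod _ (intgXZ hV (Ioo_subset_Icc_self hy))

/-- integrability in `x` of the double integral over `y, z`. -/
lemma intgXfun (hV : ContinuousOn V (Icc 0 L ×ˢ Icc 0 L ×ˢ Icc (-h) 0)) :
    Integrable (fun x => ∫ y in Ioo (0:ℝ) L, ∫ z in Ioo (-h) (0:ℝ), V (x, y, z))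
      (volume.restrict (Ioo (0:ℝ) L)) := by
  have h1 := intg3 hV
  have h2 := h1.integral_prod_left
  refine h2.congr ?_
  refine (ae_restrict_mem measurableSet_Ioo).mono fun x hx => ?_
  exact integral_prod _ (intgYZ hV (Ioo_subset_Icc_self hx))

lemma swapXY (hV : ContinuousOn V (Icc 0 L ×ˢ Icc 0 L ×ˢ Icc (-h) 0)) :
    ∫ y in Ioo (0:ℝ) L, ∫ x in Ioo (0:ℝ) L, ∫ z in Ioo (-h) (0:ℝ), V (x, y, z)
      = ∫ x in Ioo (0:ℝ) L, ∫ y in Ioo (0:ℝ) L, ∫ z in Ioo (-h) (0:ℝ), V (x, y, z) := by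
  have h1 : Integrable (fun q : (ℝ × ℝ) × ℝ => V (q.1.1, q.1.2, q.2))
      (((volume.restrict (Ioo (0:ℝ) L)).prod (volume.restrict (Ioo (0:ℝ) L))).prod
        (volume.restrict (Ioo (-h) 0))) :=
    intg3' (hV.comp (by fun_prop) (fun q hq => ⟨hq.1.1, hq.1.2, hq.2⟩))
  have h2 := h1.integral_prod_left
  exact (integral_integral_swap h2).symm

lemma swapXZ (hV : ContinuousOn V (Icc 0 L ×ˢ Icc 0 L ×ˢ Icc (-h) 0))
    {y : ℝ} (hy : y ∈ Icc 0 L) :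
    ∫ z in Ioo (-h) (0:ℝ), ∫ x in Ioo (0:ℝ) L, V (x, y, z)
      = ∫ x in Ioo (0:ℝ) L, ∫ z in Ioo (-h) (0:ℝ), V (x, y, z) :=
  (integral_integral_swap (intgXZ hV hy)).symm

lemma swapZY (hV : ContinuousOn V (Icc 0 L ×ˢ Icc 0 L ×ˢ Icc (-h) 0))
    {x : ℝ} (hx : x ∈ Icc 0 L) :
    ∫ z in Ioo (-h) (0:ℝ), ∫ y in Ioo (0:ℝ) L, V (x, y, z)
      = ∫ y in Ioo (0:ℝ) L, ∫ z in Ioo (-h) (0:ℝ), V (x, y, z) :=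
  (integral_integral_swap (intgYZ hV hx)).symm

end Box

lemma CS {α : Type*} [MeasurableSpace α] {μ : Measure α} {u v : α → ℝ}
    (hu : AEStronglyMeasurable u μ) (hv : AEStronglyMeasurable v μ)
    (hu2 : Integrable (fun a => u a ^ 2) μ) (hv2 : Integrable (fun a => v a ^ 2) μ) :
    ∫ a, |u a * v a| ∂μ ≤ Real.sqrt (∫ a, u a ^ 2 ∂μ) * Real.sqrt (∫ a, v a ^ 2 ∂μ) := by
  have hmu : MemLp u 2 μ := (memLp_two_iff_integrable_sq hu).2 hu2
  have hmv : MemLp v 2 μ := (memLp_two_iff_integrable_sq hv).2 hv2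
  have h2 : Real.HolderConjugate 2 2 := Real.HolderConjugate.two_two
  have := integral_mul_le_Lp_mul_Lq_of_nonneg h2
    (f := fun a => |u a|) (g := fun a => |v a|)
    (Filter.Eventually.of_forall fun a => abs_nonneg _)
    (Filter.Eventually.of_forall fun a => abs_nonneg _)
    (by rw [ENNReal.ofReal_ofNat]; exact hmu.abs) (by rw [ENNReal.ofReal_ofNat]; exact hmv.abs)
  have e1 : ∀ a : α, |u a * v a| = |u a| * |v a| := fun a => abs_mul _ _
  have e2 : ∀ a : α, |u a| ^ (2:ℝ) = u a ^ 2 := by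
    intro a; rw [show ((2:ℝ)) = ((2:ℕ):ℝ) by norm_num, Real.rpow_natCast, sq_abs]
  have e3 : ∀ a : α, |v a| ^ (2:ℝ) = v a ^ 2 := by
    intro a; rw [show ((2:ℝ)) = ((2:ℕ):ℝ) by norm_num, Real.rpow_natCast, sq_abs]
  simp only [e1] at *
  calc ∫ a, |u a| * |v a| ∂μ ≤ (∫ a, |u a| ^ (2:ℝ) ∂μ) ^ (1/(2:ℝ)) *
        (∫ a, |v a| ^ (2:ℝ) ∂μ) ^ (1/(2:ℝ)) := this
    _ = Real.sqrt (∫ a, u a ^ 2 ∂μ) * Real.sqrt (∫ a, v a ^ 2 ∂μ) := by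
        simp only [e2, e3]
        rw [← Real.sqrt_eq_rpow, ← Real.sqrt_eq_rpow]

lemma CSsqrt {α : Type*} [MeasurableSpace α] {μ : Measure α} {w1 w2 : α → ℝ}
    (h1 : Integrable w1 μ) (h2 : Integrable w2 μ)
    (n1 : ∀ a, 0 ≤ w1 a) (n2 : ∀ a, 0 ≤ w2 a) :
    ∫ a, Real.sqrt (w1 a) * Real.sqrt (w2 a) ∂μ
      ≤ Real.sqrt (∫ a, w1 a ∂μ) * Real.sqrt (∫ a, w2 a ∂μ) := by
  have e1 : (fun a => Real.sqrt (w1 a) ^ 2) = w1 := by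
    funext a; exact Real.sq_sqrt (n1 a)
  have e2 : (fun a => Real.sqrt (w2 a) ^ 2) = w2 := by
    funext a; exact Real.sq_sqrt (n2 a)
  have hm1 : AEStronglyMeasurable (fun a => Real.sqrt (w1 a)) μ :=
    Real.continuous_sqrt.comp_aestronglyMeasurable h1.aestronglyMeasurable
  have hm2 : AEStronglyMeasurable (fun a => Real.sqrt (w2 a)) μ :=
    Real.continuous_sqrt.comp_aestronglyMeasurable h2.aestronglyMeasurable
  have := CS hm1 hm2 (by rw [e1]; exact h1) (by rw [e2]; exact h2)
  rw [e1, e2] at this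
  refine le_trans (le_of_eq ?_) this
  exact integral_congr_ae (Filter.Eventually.of_forall fun a =>
    (abs_of_nonneg (mul_nonneg (Real.sqrt_nonneg _) (Real.sqrt_nonneg _))).symm)

lemma CSlevel {α : Type*} [MeasurableSpace α] {μ : Measure α} {T w1 w2 : α → ℝ}
    (hT : ∀ a, 0 ≤ T a) (h1 : Integrable w1 μ) (h2 : Integrable w2 μ)
    (n1 : ∀ a, 0 ≤ w1 a) (n2 : ∀ a, 0 ≤ w2 a)
    (hb : ∀ᵐ a ∂μ, T a ≤ Real.sqrt (w1 a) * Real.sqrt (w2 a)) :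
    ∫ a, T a ∂μ ≤ Real.sqrt (∫ a, w1 a ∂μ) * Real.sqrt (∫ a, w2 a ∂μ) := by
  have hint : Integrable (fun a => Real.sqrt (w1 a) * Real.sqrt (w2 a)) μ := by
    refine Integrable.mono' (h1.add h2)
      ((Real.continuous_sqrt.comp_aestronglyMeasurable h1.aestronglyMeasurable).mul
        (Real.continuous_sqrt.comp_aestronglyMeasurable h2.aestronglyMeasurable))
      (Filter.Eventually.of_forall fun a => ?_)
    rw [Real.norm_eq_abs, abs_of_nonneg (mul_nonneg (Real.sqrt_nonneg _) (Real.sqrt_nonneg _))]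
    show Real.sqrt (w1 a) * Real.sqrt (w2 a) ≤ w1 a + w2 a
    nlinarith [Real.sq_sqrt (n1 a), Real.sq_sqrt (n2 a), Real.sqrt_nonneg (w1 a),
      Real.sqrt_nonneg (w2 a), sq_nonneg (Real.sqrt (w1 a) - Real.sqrt (w2 a))]
  exact (integral_mono_of_nonneg (Filter.Eventually.of_forall hT) hint hb).trans
    (CSsqrt h1 h2 n1 n2)

set_option maxHeartbeats 1000000 in
lemma CS3 {L h : ℝ} {u v : ℝ × ℝ × ℝ → ℝ}
    (hu : ContinuousOn u (Icc 0 L ×ˢ Icc 0 L ×ˢ Icc (-h) 0))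
    (hv : ContinuousOn v (Icc 0 L ×ˢ Icc 0 L ×ˢ Icc (-h) 0)) :
    ∫ x in Ioo (0:ℝ) L, ∫ y in Ioo (0:ℝ) L, ∫ z in Ioo (-h) (0:ℝ),
        |u (x, y, z) * v (x, y, z)|
      ≤ Real.sqrt (∫ x in Ioo (0:ℝ) L, ∫ y in Ioo (0:ℝ) L, ∫ z in Ioo (-h) (0:ℝ),
          u (x, y, z) ^ 2)
        * Real.sqrt (∫ x in Ioo (0:ℝ) L, ∫ y in Ioo (0:ℝ) L, ∫ z in Ioo (-h) (0:ℝ),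
          v (x, y, z) ^ 2) := by
  have hu2 : ContinuousOn (fun p => u p ^ 2) (Icc 0 L ×ˢ Icc 0 L ×ˢ Icc (-h) 0) := hu.pow 2
  have hv2 : ContinuousOn (fun p => v p ^ 2) (Icc 0 L ×ˢ Icc 0 L ×ˢ Icc (-h) 0) := hv.pow 2
  have base : ∀ x ∈ Icc (0:ℝ) L, ∀ y ∈ Icc (0:ℝ) L,
      ∫ z in Ioo (-h) (0:ℝ), |u (x, y, z) * v (x, y, z)|
        ≤ Real.sqrt (∫ z in Ioo (-h) (0:ℝ), u (x, y, z) ^ 2)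
          * Real.sqrt (∫ z in Ioo (-h) (0:ℝ), v (x, y, z) ^ 2) := by
    intro x hx y hy
    have cu : ContinuousOn (fun z => u (x, y, z)) (Icc (-h) 0) :=
      hu.comp (by fun_prop) (fun z hz => ⟨hx, hy, hz⟩)
    have cv : ContinuousOn (fun z => v (x, y, z)) (Icc (-h) 0) :=
      hv.comp (by fun_prop) (fun z hz => ⟨hx, hy, hz⟩)
    exact CS ((cu.mono Ioo_subset_Icc_self).aestronglyMeasurable measurableSet_Ioo)
      ((cv.mono Ioo_subset_Icc_self).aestronglyMeasurable measurableSet_Ioo)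
      (sliceZ hu2 hx hy) (sliceZ hv2 hx hy)
  have levY : ∀ x ∈ Icc (0:ℝ) L,
      ∫ y in Ioo (0:ℝ) L, ∫ z in Ioo (-h) (0:ℝ), |u (x, y, z) * v (x, y, z)|
        ≤ Real.sqrt (∫ y in Ioo (0:ℝ) L, ∫ z in Ioo (-h) (0:ℝ), u (x, y, z) ^ 2)
          * Real.sqrt (∫ y in Ioo (0:ℝ) L, ∫ z in Ioo (-h) (0:ℝ), v (x, y, z) ^ 2) := by
    intro x hx
    refine CSlevel (fun y => integral_nonneg fun z => abs_nonneg _)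
      ((intgYZ hu2 hx).integral_prod_left) ((intgYZ hv2 hx).integral_prod_left)
      (fun y => integral_nonneg fun z => sq_nonneg _)
      (fun y => integral_nonneg fun z => sq_nonneg _) ?_
    exact (ae_restrict_mem measurableSet_Ioo).mono fun y hy =>
      base x hx y (Ioo_subset_Icc_self hy)
  have i1 := intgXfun hu2
  have i2 := intgXfun hv2
  beta_reduce at i1 i2
  have final := CSlevel (μ := volume.restrict (Ioo (0:ℝ) L))
    (T := fun x => ∫ y in Ioo (0:ℝ) L, ∫ z in Ioo (-h) (0:ℝ), |u (x, y, z) * v (x, y, z)|)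
    (w1 := fun x => ∫ y in Ioo (0:ℝ) L, ∫ z in Ioo (-h) (0:ℝ), u (x, y, z) ^ 2)
    (w2 := fun x => ∫ y in Ioo (0:ℝ) L, ∫ z in Ioo (-h) (0:ℝ), v (x, y, z) ^ 2)
    (fun x => integral_nonneg fun y => integral_nonneg fun z => abs_nonneg _)
    i1 i2
    (fun x => integral_nonneg fun y => integral_nonneg fun z => sq_nonneg _)
    (fun x => integral_nonneg fun y => integral_nonneg fun z => sq_nonneg _)
    ((ae_restrict_mem measurableSet_Ioo).mono fun x hx => levY x (Ioo_subset_Icc_self hx))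
  exact final

variable {U : Set (ℝ × ℝ × ℝ)} {P : ℝ × ℝ × ℝ → ℝ}

lemma fderiv_contOn (hU : IsOpen U) (hP : ContDiffOn ℝ (⊤ : ℕ∞) P U) (v : ℝ × ℝ × ℝ) :
    ContinuousOn (fun p => fderiv ℝ P p v) U :=
  (hP.continuousOn_fderiv_of_isOpen hU (by norm_num)).clm_apply continuousOn_const

lemma hasDerivAt_x (hU : IsOpen U) (hP : ContDiffOn ℝ (⊤ : ℕ∞) P U) {p : ℝ × ℝ × ℝ}
    (hp : p ∈ U) :
    HasDerivAt (fun t => P (t, p.2.1, p.2.2)) (fderiv ℝ P p (1, 0, 0)) p.1 := by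
  have hd : DifferentiableAt ℝ P p :=
    (hP.contDiffAt (hU.mem_nhds hp)).differentiableAt (by norm_num)
  have hc : HasDerivAt (fun t : ℝ => (t, p.2.1, p.2.2)) ((1:ℝ), (0:ℝ), (0:ℝ)) p.1 :=
    (hasDerivAt_id _).prodMk (hasDerivAt_const _ _)
  exact hd.hasFDerivAt.comp_hasDerivAt p.1 hc

lemma hasDerivAt_y (hU : IsOpen U) (hP : ContDiffOn ℝ (⊤ : ℕ∞) P U) {p : ℝ × ℝ × ℝ}
    (hp : p ∈ U) :
    HasDerivAt (fun t => P (p.1, t, p.2.2)) (fderiv ℝ P p (0, 1, 0)) p.2.1 := by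
  have hd : DifferentiableAt ℝ P p :=
    (hP.contDiffAt (hU.mem_nhds hp)).differentiableAt (by norm_num)
  have hc : HasDerivAt (fun t : ℝ => ((p.1 : ℝ), t, p.2.2)) ((0:ℝ), (1:ℝ), (0:ℝ)) p.2.1 :=
    (hasDerivAt_const _ _).prodMk ((hasDerivAt_id _).prodMk (hasDerivAt_const _ _))
  exact hd.hasFDerivAt.comp_hasDerivAt p.2.1 hc
lemma ftc_bound {L : ℝ} {φ D : ℝ → ℝ}
    (hD : ContinuousOn D (Icc 0 L))
    (hd : ∀ t ∈ Icc (0:ℝ) L, HasDerivAt φ (D t) t)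
    {x₀ x : ℝ} (h₀ : x₀ ∈ Ioo (0:ℝ) L) (hx : x ∈ Ioo (0:ℝ) L) :
    φ x - φ x₀ ≤ ∫ t in Ioo (0:ℝ) L, |D t| := by
  have h₀' : x₀ ∈ Icc (0:ℝ) L := Ioo_subset_Icc_self h₀
  have hx' : x ∈ Icc (0:ℝ) L := Ioo_subset_Icc_self hx
  have hsub : uIcc x₀ x ⊆ Icc 0 L := uIcc_subset_Icc h₀' hx'
  have hsub' : uIoc x₀ x ⊆ Ioo (0:ℝ) L := by
    intro t ht
    rw [mem_uIoc] at ht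
    rcases ht with ht | ht
    · exact ⟨h₀.1.trans ht.1, lt_of_le_of_lt ht.2 hx.2⟩
    · exact ⟨hx.1.trans ht.1, lt_of_le_of_lt ht.2 h₀.2⟩
  have hftc : ∫ t in x₀..x, D t = φ x - φ x₀ :=
    intervalIntegral.integral_eq_sub_of_hasDerivAt (fun t ht => hd t (hsub ht))
      ((hD.mono hsub).intervalIntegrable)
  calc φ x - φ x₀ = ∫ t in x₀..x, D t := hftc.symm
    _ ≤ |∫ t in x₀..x, D t| := le_abs_self _
    _ ≤ ∫ t in uIoc x₀ x, |D t| := by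
        simpa using intervalIntegral.norm_integral_le_integral_norm_uIoc (f := D) (a := x₀) (b := x)
    _ ≤ ∫ t in Ioo (0:ℝ) L, |D t| := by
        refine setIntegral_mono_set (intg1 hD.abs) ?_ (HasSubset.Subset.eventuallyLE hsub')
        exact Filter.Eventually.of_forall fun t => abs_nonneg _

lemma avg_bound {L : ℝ} (hL : 0 < L) {F : ℝ → ℝ} {Hc : ℝ}
    (hF : IntegrableOn F (Ioo 0 L))
    (hstep : ∀ x₀ ∈ Ioo (0:ℝ) L, ∀ x ∈ Ioo (0:ℝ) L, F x - F x₀ ≤ Hc)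
    {x : ℝ} (hx : x ∈ Ioo (0:ℝ) L) :
    F x ≤ (1/L) * (∫ t in Ioo (0:ℝ) L, F t) + Hc := by
  have h1 : ∀ x₀ ∈ Ioo (0:ℝ) L, F x - Hc ≤ F x₀ := fun x₀ h₀ => by
    linarith [hstep x₀ h₀ x hx]
  have hconst : IntegrableOn (fun _ : ℝ => F x - Hc) (Ioo 0 L) := by
    exact integrableOn_const measure_Ioo_lt_top.ne
  have h2 : ∫ _ in Ioo (0:ℝ) L, (F x - Hc) ≤ ∫ x₀ in Ioo (0:ℝ) L, F x₀ :=
    setIntegral_mono_on hconst hF measurableSet_Ioo h1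
  rw [setIntegral_const, Real.volume_real_Ioo_of_le hL.le, sub_zero,
    smul_eq_mul] at h2
  have hinv : 0 < 1/L := by positivity
  have := mul_le_mul_of_nonneg_left h2 hinv.le
  calc F x = (1/L) * (L * (F x - Hc)) + Hc := by field_simp; ring
    _ ≤ (1/L) * (∫ x₀ in Ioo (0:ℝ) L, F x₀) + Hc := by linarith [this]

lemma tripleCongr {L h : ℝ} {g w : ℝ → ℝ → ℝ → ℝ}
    (he : ∀ x ∈ Ioo (0:ℝ) L, ∀ y ∈ Ioo (0:ℝ) L, ∀ z ∈ Ioo (-h) (0:ℝ), g x y z = w x y z) :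
    (∫ x in Ioo (0:ℝ) L, ∫ y in Ioo (0:ℝ) L, ∫ z in Ioo (-h) (0:ℝ), g x y z)
      = ∫ x in Ioo (0:ℝ) L, ∫ y in Ioo (0:ℝ) L, ∫ z in Ioo (-h) (0:ℝ), w x y z := by
  refine setIntegral_congr_fun measurableSet_Ioo fun x hx => ?_
  refine setIntegral_congr_fun measurableSet_Ioo fun y hy => ?_
  exact setIntegral_congr_fun measurableSet_Ioo fun z hz => he x hx y hy z hz

lemma sqL2_nonneg (L h : ℝ) (w : ℝ → ℝ → ℝ → ℝ) : 0 ≤ sqL2 L h w := by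
  unfold sqL2 intM
  exact integral_nonneg fun x => integral_nonneg fun y => integral_nonneg fun z => sq_nonneg _


set_option maxHeartbeats 1000000 in
lemma core {L h : ℝ} (hL : 0 < L) (hh : 0 < h) {f : ℝ → ℝ → ℝ → ℝ}
    (hPK : ContinuousOn (fun p : ℝ × ℝ × ℝ => f p.1 p.2.1 p.2.2)
      (Icc 0 L ×ˢ Icc 0 L ×ˢ Icc (-h) 0))
    (wx wy : ℝ × ℝ × ℝ → ℝ)
    (hwxc : ContinuousOn wx (Icc 0 L ×ˢ Icc 0 L ×ˢ Icc (-h) 0))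
    (hwyc : ContinuousOn wy (Icc 0 L ×ˢ Icc 0 L ×ˢ Icc (-h) 0))
    (hd6x : ∀ x y z : ℝ, (x, y, z) ∈ (Icc 0 L ×ˢ Icc 0 L ×ˢ Icc (-h) 0 : Set (ℝ × ℝ × ℝ)) →
      HasDerivAt (fun t => f t y z ^ 6) (2 * f x y z ^ 3 * wx (x, y, z)) x)
    (hd6y : ∀ x y z : ℝ, (x, y, z) ∈ (Icc 0 L ×ˢ Icc 0 L ×ˢ Icc (-h) 0 : Set (ℝ × ℝ × ℝ)) →
      HasDerivAt (fun t => f x t z ^ 6) (2 * f x y z ^ 3 * wy (x, y, z)) y)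
    (hwx3 : ∀ x y z : ℝ, (x, y, z) ∈ (Icc 0 L ×ˢ Icc 0 L ×ˢ Icc (-h) 0 : Set (ℝ × ℝ × ℝ)) →
      pdx (fun a b c => f a b c ^ 3) x y z = wx (x, y, z))
    (hwy3 : ∀ x y z : ℝ, (x, y, z) ∈ (Icc 0 L ×ˢ Icc 0 L ×ˢ Icc (-h) 0 : Set (ℝ × ℝ × ℝ)) →
      pdy (fun a b c => f a b c ^ 3) x y z = wy (x, y, z)) :
    Real.sqrt (∫ x in Ioo (0:ℝ) L, ∫ y in Ioo (0:ℝ) L,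
        (∫ z in Ioo (-h) (0:ℝ), f x y z ^ 6) ^ 2)
      ≤ (1/L) * (∫ x in Ioo (0:ℝ) L, ∫ y in Ioo (0:ℝ) L, ∫ z in Ioo (-h) (0:ℝ), f x y z ^ 6)
        + 2 * Real.sqrt (∫ x in Ioo (0:ℝ) L, ∫ y in Ioo (0:ℝ) L,
            ∫ z in Ioo (-h) (0:ℝ), f x y z ^ 6)
          * gradL2 L h (fun x y z => f x y z ^ 3) := by
  -- continuity packs
  have hC6 : ContinuousOn (fun p : ℝ × ℝ × ℝ => f p.1 p.2.1 p.2.2 ^ 6)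
      (Icc 0 L ×ˢ Icc 0 L ×ˢ Icc (-h) 0) := hPK.pow 6
  have hCu : ContinuousOn (fun p : ℝ × ℝ × ℝ => 2 * f p.1 p.2.1 p.2.2 ^ 3)
      (Icc 0 L ×ˢ Icc 0 L ×ˢ Icc (-h) 0) := continuousOn_const.mul (hPK.pow 3)
  have hCDxA : ContinuousOn (fun p : ℝ × ℝ × ℝ => |2 * f p.1 p.2.1 p.2.2 ^ 3 * wx p|)
      (Icc 0 L ×ˢ Icc 0 L ×ˢ Icc (-h) 0) := (hCu.mul hwxc).abs
  have hCDyA : ContinuousOn (fun p : ℝ × ℝ × ℝ => |2 * f p.1 p.2.1 p.2.2 ^ 3 * wy p|)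
      (Icc 0 L ×ˢ Icc 0 L ×ˢ Icc (-h) 0) := (hCu.mul hwyc).abs
  -- step X : FTC bound in the x-direction
  have stepX : ∀ y ∈ Ioo (0:ℝ) L, ∀ x₀ ∈ Ioo (0:ℝ) L, ∀ x ∈ Ioo (0:ℝ) L,
      (∫ z in Ioo (-h) (0:ℝ), f x y z ^ 6) - (∫ z in Ioo (-h) (0:ℝ), f x₀ y z ^ 6)
        ≤ ∫ x' in Ioo (0:ℝ) L, ∫ z in Ioo (-h) (0:ℝ), |2 * f x' y z ^ 3 * wx (x', y, z)| := by
    intro y hy x₀ h₀ x hx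
    have hyI : y ∈ Icc (0:ℝ) L := Ioo_subset_Icc_self hy
    have hxI : x ∈ Icc (0:ℝ) L := Ioo_subset_Icc_self hx
    have hx0I : x₀ ∈ Icc (0:ℝ) L := Ioo_subset_Icc_self h₀
    have hpt : ∀ z ∈ Ioo (-h) (0:ℝ), f x y z ^ 6 - f x₀ y z ^ 6
        ≤ ∫ t in Ioo (0:ℝ) L, |2 * f t y z ^ 3 * wx (t, y, z)| := by
      intro z hz
      have hzI : z ∈ Icc (-h) 0 := Ioo_subset_Icc_self hz
      refine ftc_bound (φ := fun t => f t y z ^ 6)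
        (D := fun t => 2 * f t y z ^ 3 * wx (t, y, z)) ?_ ?_ h₀ hx
      · exact ContinuousOn.comp (hCu.mul hwxc)
          (Continuous.continuousOn (by fun_prop : Continuous fun t : ℝ => ((t, y, z) : ℝ × ℝ × ℝ)))
          (fun t ht => ⟨ht, hyI, hzI⟩)
      · intro t ht
        exact hd6x t y z ⟨ht, hyI, hzI⟩
    have hi1 : Integrable (fun z => f x y z ^ 6) (volume.restrict (Ioo (-h) 0)) :=
      sliceZ hC6 hxI hyI
    have hi0 : Integrable (fun z => f x₀ y z ^ 6) (volume.restrict (Ioo (-h) 0)) :=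
      sliceZ hC6 hx0I hyI
    have hiR : Integrable
        (fun z => ∫ t in Ioo (0:ℝ) L, |2 * f t y z ^ 3 * wx (t, y, z)|)
        (volume.restrict (Ioo (-h) 0)) := (intgXZ hCDxA hyI).integral_prod_right
    calc (∫ z in Ioo (-h) (0:ℝ), f x y z ^ 6) - (∫ z in Ioo (-h) (0:ℝ), f x₀ y z ^ 6)
        = ∫ z in Ioo (-h) (0:ℝ), (f x y z ^ 6 - f x₀ y z ^ 6) := (integral_sub hi1 hi0).symm
      _ ≤ ∫ z in Ioo (-h) (0:ℝ), ∫ t in Ioo (0:ℝ) L, |2 * f t y z ^ 3 * wx (t, y, z)| :=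
          setIntegral_mono_on (hi1.sub hi0) hiR measurableSet_Ioo hpt
      _ = ∫ x' in Ioo (0:ℝ) L, ∫ z in Ioo (-h) (0:ℝ), |2 * f x' y z ^ 3 * wx (x', y, z)| :=
          swapXZ hCDxA hyI
  -- step Y : FTC bound in the y-direction
  have stepY : ∀ x ∈ Ioo (0:ℝ) L, ∀ y₀ ∈ Ioo (0:ℝ) L, ∀ y ∈ Ioo (0:ℝ) L,
      (∫ z in Ioo (-h) (0:ℝ), f x y z ^ 6) - (∫ z in Ioo (-h) (0:ℝ), f x y₀ z ^ 6)
        ≤ ∫ y' in Ioo (0:ℝ) L, ∫ z in Ioo (-h) (0:ℝ), |2 * f x y' z ^ 3 * wy (x, y', z)| := by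
    intro x hx y₀ h₀ y hy
    have hyI : y ∈ Icc (0:ℝ) L := Ioo_subset_Icc_self hy
    have hxI : x ∈ Icc (0:ℝ) L := Ioo_subset_Icc_self hx
    have hy0I : y₀ ∈ Icc (0:ℝ) L := Ioo_subset_Icc_self h₀
    have hpt : ∀ z ∈ Ioo (-h) (0:ℝ), f x y z ^ 6 - f x y₀ z ^ 6
        ≤ ∫ t in Ioo (0:ℝ) L, |2 * f x t z ^ 3 * wy (x, t, z)| := by
      intro z hz
      have hzI : z ∈ Icc (-h) 0 := Ioo_subset_Icc_self hz
      refine ftc_bound (φ := fun t => f x t z ^ 6)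
        (D := fun t => 2 * f x t z ^ 3 * wy (x, t, z)) ?_ ?_ h₀ hy
      · exact ContinuousOn.comp (hCu.mul hwyc)
          (Continuous.continuousOn (by fun_prop : Continuous fun t : ℝ => ((x, t, z) : ℝ × ℝ × ℝ)))
          (fun t ht => ⟨hxI, ht, hzI⟩)
      · intro t ht
        exact hd6y x t z ⟨hxI, ht, hzI⟩
    have hi1 : Integrable (fun z => f x y z ^ 6) (volume.restrict (Ioo (-h) 0)) :=
      sliceZ hC6 hxI hyI
    have hi0 : Integrable (fun z => f x y₀ z ^ 6) (volume.restrict (Ioo (-h) 0)) :=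
      sliceZ hC6 hxI hy0I
    have hiR : Integrable
        (fun z => ∫ t in Ioo (0:ℝ) L, |2 * f x t z ^ 3 * wy (x, t, z)|)
        (volume.restrict (Ioo (-h) 0)) := (intgYZ hCDyA hxI).integral_prod_right
    calc (∫ z in Ioo (-h) (0:ℝ), f x y z ^ 6) - (∫ z in Ioo (-h) (0:ℝ), f x y₀ z ^ 6)
        = ∫ z in Ioo (-h) (0:ℝ), (f x y z ^ 6 - f x y₀ z ^ 6) := (integral_sub hi1 hi0).symm
      _ ≤ ∫ z in Ioo (-h) (0:ℝ), ∫ t in Ioo (0:ℝ) L, |2 * f x t z ^ 3 * wy (x, t, z)| :=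
          setIntegral_mono_on (hi1.sub hi0) hiR measurableSet_Ioo hpt
      _ = ∫ y' in Ioo (0:ℝ) L, ∫ z in Ioo (-h) (0:ℝ), |2 * f x y' z ^ 3 * wy (x, y', z)| :=
          swapZY hCDyA hxI
  -- averaged bounds
  have avgX : ∀ y ∈ Ioo (0:ℝ) L, ∀ x ∈ Ioo (0:ℝ) L,
      (∫ z in Ioo (-h) (0:ℝ), f x y z ^ 6)
        ≤ (1/L) * (∫ t in Ioo (0:ℝ) L, ∫ z in Ioo (-h) (0:ℝ), f t y z ^ 6)
          + ∫ x' in Ioo (0:ℝ) L, ∫ z in Ioo (-h) (0:ℝ), |2 * f x' y z ^ 3 * wx (x', y, z)| := by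
    intro y hy x hx
    have hyI : y ∈ Icc (0:ℝ) L := Ioo_subset_Icc_self hy
    have hIF : Integrable (fun t => ∫ z in Ioo (-h) (0:ℝ), f t y z ^ 6)
        (volume.restrict (Ioo (0:ℝ) L)) := (intgXZ hC6 hyI).integral_prod_left
    exact avg_bound hL hIF (fun x₀ h₀ x' hx' => stepX y hy x₀ h₀ x' hx') hx
  have avgY : ∀ x ∈ Ioo (0:ℝ) L, ∀ y ∈ Ioo (0:ℝ) L,
      (∫ z in Ioo (-h) (0:ℝ), f x y z ^ 6)
        ≤ (1/L) * (∫ t in Ioo (0:ℝ) L, ∫ z in Ioo (-h) (0:ℝ), f x t z ^ 6)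
          + ∫ y' in Ioo (0:ℝ) L, ∫ z in Ioo (-h) (0:ℝ), |2 * f x y' z ^ 3 * wy (x, y', z)| := by
    intro x hx y hy
    have hxI : x ∈ Icc (0:ℝ) L := Ioo_subset_Icc_self hx
    have hIF : Integrable (fun t => ∫ z in Ioo (-h) (0:ℝ), f x t z ^ 6)
        (volume.restrict (Ioo (0:ℝ) L)) := (intgYZ hC6 hxI).integral_prod_left
    exact avg_bound hL hIF (fun y₀ h₀ y' hy' => stepY x hx y₀ h₀ y' hy') hy
  -- nonnegativity of the inner slice integral
  have hF0 : ∀ x y : ℝ, 0 ≤ ∫ z in Ioo (-h) (0:ℝ), f x y z ^ 6 :=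
    fun x y => integral_nonneg fun z => by positivity
  -- the one-variable majorants
  set Ayf : ℝ → ℝ := fun y =>
    (1/L) * (∫ t in Ioo (0:ℝ) L, ∫ z in Ioo (-h) (0:ℝ), f t y z ^ 6)
      + ∫ x' in Ioo (0:ℝ) L, ∫ z in Ioo (-h) (0:ℝ), |2 * f x' y z ^ 3 * wx (x', y, z)|
    with hAyf
  set Bxf : ℝ → ℝ := fun x =>
    (1/L) * (∫ t in Ioo (0:ℝ) L, ∫ z in Ioo (-h) (0:ℝ), f x t z ^ 6)
      + ∫ y' in Ioo (0:ℝ) L, ∫ z in Ioo (-h) (0:ℝ), |2 * f x y' z ^ 3 * wy (x, y', z)|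
    with hBxf
  have avgX' : ∀ y ∈ Ioo (0:ℝ) L, ∀ x ∈ Ioo (0:ℝ) L,
      (∫ z in Ioo (-h) (0:ℝ), f x y z ^ 6) ≤ Ayf y := by
    intro y hy x hx
    simp only [hAyf]
    exact avgX y hy x hx
  have avgY' : ∀ x ∈ Ioo (0:ℝ) L, ∀ y ∈ Ioo (0:ℝ) L,
      (∫ z in Ioo (-h) (0:ℝ), f x y z ^ 6) ≤ Bxf x := by
    intro x hx y hy
    simp only [hBxf]
    exact avgY x hx y hy
  have hA0 : ∀ y, 0 ≤ Ayf y := by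
    intro y
    simp only [hAyf]
    have h1 : 0 ≤ ∫ t in Ioo (0:ℝ) L, ∫ z in Ioo (-h) (0:ℝ), f t y z ^ 6 :=
      integral_nonneg fun t => hF0 t y
    have h2 : 0 ≤ ∫ x' in Ioo (0:ℝ) L, ∫ z in Ioo (-h) (0:ℝ),
        |2 * f x' y z ^ 3 * wx (x', y, z)| :=
      integral_nonneg fun x' => integral_nonneg fun z => abs_nonneg _
    positivity
  have hB0 : ∀ x, 0 ≤ Bxf x := by
    intro x
    simp only [hBxf]
    have h1 : 0 ≤ ∫ t in Ioo (0:ℝ) L, ∫ z in Ioo (-h) (0:ℝ), f x t z ^ 6 :=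
      integral_nonneg fun t => hF0 x t
    have h2 : 0 ≤ ∫ y' in Ioo (0:ℝ) L, ∫ z in Ioo (-h) (0:ℝ),
        |2 * f x y' z ^ 3 * wy (x, y', z)| :=
      integral_nonneg fun y' => integral_nonneg fun z => abs_nonneg _
    positivity
  -- integrability of the majorants
  have IntAy : Integrable Ayf (volume.restrict (Ioo (0:ℝ) L)) := by
    have h1 := intgYfun hC6
    have h2 := intgYfun hCDxA
    rw [hAyf]
    exact (h1.const_mul (1/L)).add h2
  have IntBx : Integrable Bxf (volume.restrict (Ioo (0:ℝ) L)) := by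
    have h1 := intgXfun hC6
    have h2 := intgXfun hCDyA
    rw [hBxf]
    exact (h1.const_mul (1/L)).add h2
  -- the product bound
  have hinner : ∀ x ∈ Ioo (0:ℝ) L,
      (∫ y in Ioo (0:ℝ) L, (∫ z in Ioo (-h) (0:ℝ), f x y z ^ 6) ^ 2)
        ≤ Bxf x * ∫ y in Ioo (0:ℝ) L, Ayf y := by
    intro x hx
    have hb : ∀ᵐ y ∂(volume.restrict (Ioo (0:ℝ) L)),
        (∫ z in Ioo (-h) (0:ℝ), f x y z ^ 6) ^ 2 ≤ Bxf x * Ayf y := by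
      refine (ae_restrict_mem measurableSet_Ioo).mono fun y hy => ?_
      rw [pow_two]
      exact mul_le_mul (avgY' x hx y hy) (avgX' y hy x hx) (hF0 x y) (hB0 x)
    have hmono := integral_mono_of_nonneg
      (Filter.Eventually.of_forall fun y => sq_nonneg _) (IntAy.const_mul (Bxf x)) hb
    calc (∫ y in Ioo (0:ℝ) L, (∫ z in Ioo (-h) (0:ℝ), f x y z ^ 6) ^ 2)
        ≤ ∫ y in Ioo (0:ℝ) L, Bxf x * Ayf y := hmono
      _ = Bxf x * ∫ y in Ioo (0:ℝ) L, Ayf y := integral_const_mul _ _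
  have main2 : (∫ x in Ioo (0:ℝ) L, ∫ y in Ioo (0:ℝ) L,
        (∫ z in Ioo (-h) (0:ℝ), f x y z ^ 6) ^ 2)
      ≤ (∫ x in Ioo (0:ℝ) L, Bxf x) * ∫ y in Ioo (0:ℝ) L, Ayf y := by
    have houter := integral_mono_of_nonneg
      (Filter.Eventually.of_forall fun x => integral_nonneg fun y => sq_nonneg _)
      (IntBx.mul_const (∫ y in Ioo (0:ℝ) L, Ayf y))
      ((ae_restrict_mem measurableSet_Ioo).mono fun x hx => hinner x hx)
    calc (∫ x in Ioo (0:ℝ) L, ∫ y in Ioo (0:ℝ) L,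
          (∫ z in Ioo (-h) (0:ℝ), f x y z ^ 6) ^ 2)
        ≤ ∫ x in Ioo (0:ℝ) L, (Bxf x * ∫ y in Ioo (0:ℝ) L, Ayf y) := houter
      _ = (∫ x in Ioo (0:ℝ) L, Bxf x) * ∫ y in Ioo (0:ℝ) L, Ayf y := integral_mul_const _ _
  -- evaluations of the integrals of the majorants
  have hBval : (∫ x in Ioo (0:ℝ) L, Bxf x)
      = (1/L) * (∫ x in Ioo (0:ℝ) L, ∫ y in Ioo (0:ℝ) L, ∫ z in Ioo (-h) (0:ℝ), f x y z ^ 6)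
        + ∫ x in Ioo (0:ℝ) L, ∫ y in Ioo (0:ℝ) L, ∫ z in Ioo (-h) (0:ℝ),
            |2 * f x y z ^ 3 * wy (x, y, z)| := by
    have h1 := intgXfun hC6
    have h2 := intgXfun hCDyA
    rw [hBxf]
    rw [integral_add (h1.const_mul (1/L)) h2, integral_const_mul]
  have hAval : (∫ y in Ioo (0:ℝ) L, Ayf y)
      = (1/L) * (∫ x in Ioo (0:ℝ) L, ∫ y in Ioo (0:ℝ) L, ∫ z in Ioo (-h) (0:ℝ), f x y z ^ 6)
        + ∫ x in Ioo (0:ℝ) L, ∫ y in Ioo (0:ℝ) L, ∫ z in Ioo (-h) (0:ℝ),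
            |2 * f x y z ^ 3 * wx (x, y, z)| := by
    have h1 := intgYfun hC6
    have h2 := intgYfun hCDxA
    rw [hAyf]
    rw [integral_add (h1.const_mul (1/L)) h2, integral_const_mul]
    rw [show (∫ y in Ioo (0:ℝ) L, ∫ x in Ioo (0:ℝ) L, ∫ z in Ioo (-h) (0:ℝ), f x y z ^ 6)
        = ∫ x in Ioo (0:ℝ) L, ∫ y in Ioo (0:ℝ) L, ∫ z in Ioo (-h) (0:ℝ), f x y z ^ 6
      from swapXY hC6]
    rw [show (∫ y in Ioo (0:ℝ) L, ∫ x in Ioo (0:ℝ) L, ∫ z in Ioo (-h) (0:ℝ),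
          |2 * f x y z ^ 3 * wx (x, y, z)|)
        = ∫ x in Ioo (0:ℝ) L, ∫ y in Ioo (0:ℝ) L, ∫ z in Ioo (-h) (0:ℝ),
          |2 * f x y z ^ 3 * wx (x, y, z)|
      from swapXY hCDxA]
  -- abbreviations
  have hX0 : 0 ≤ ∫ x in Ioo (0:ℝ) L, ∫ y in Ioo (0:ℝ) L, ∫ z in Ioo (-h) (0:ℝ), f x y z ^ 6 :=
    integral_nonneg fun x => integral_nonneg fun y => hF0 x y
  have h4 : (∫ x in Ioo (0:ℝ) L, ∫ y in Ioo (0:ℝ) L, ∫ z in Ioo (-h) (0:ℝ),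
        (2 * f x y z ^ 3) ^ 2)
      = 4 * ∫ x in Ioo (0:ℝ) L, ∫ y in Ioo (0:ℝ) L, ∫ z in Ioo (-h) (0:ℝ), f x y z ^ 6 := by
    rw [show (∫ x in Ioo (0:ℝ) L, ∫ y in Ioo (0:ℝ) L, ∫ z in Ioo (-h) (0:ℝ),
          (2 * f x y z ^ 3) ^ 2)
        = ∫ x in Ioo (0:ℝ) L, ∫ y in Ioo (0:ℝ) L, ∫ z in Ioo (-h) (0:ℝ), 4 * f x y z ^ 6
      from tripleCongr fun x _ y _ z _ => by ring]
    simp only [integral_const_mul]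
  have hsqrt4 : Real.sqrt (4 * ∫ x in Ioo (0:ℝ) L, ∫ y in Ioo (0:ℝ) L,
        ∫ z in Ioo (-h) (0:ℝ), f x y z ^ 6)
      = 2 * Real.sqrt (∫ x in Ioo (0:ℝ) L, ∫ y in Ioo (0:ℝ) L,
        ∫ z in Ioo (-h) (0:ℝ), f x y z ^ 6) := by
    rw [show (4:ℝ) = 2 ^ 2 by norm_num, Real.sqrt_mul (by positivity),
      Real.sqrt_sq (by norm_num : (0:ℝ) ≤ 2)]
  -- Cauchy–Schwarz bounds on the derivative terms
  have csx := CS3 (u := fun p : ℝ × ℝ × ℝ => 2 * f p.1 p.2.1 p.2.2 ^ 3) (v := wx) hCu hwxc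
  have csy := CS3 (u := fun p : ℝ × ℝ × ℝ => 2 * f p.1 p.2.1 p.2.2 ^ 3) (v := wy) hCu hwyc
  rw [h4, hsqrt4] at csx csy
  -- relation with the gradient norm
  have hWxle : Real.sqrt (∫ x in Ioo (0:ℝ) L, ∫ y in Ioo (0:ℝ) L, ∫ z in Ioo (-h) (0:ℝ),
        wx (x, y, z) ^ 2) ≤ gradL2 L h (fun a b c => f a b c ^ 3) := by
    have he : (∫ x in Ioo (0:ℝ) L, ∫ y in Ioo (0:ℝ) L, ∫ z in Ioo (-h) (0:ℝ),
          wx (x, y, z) ^ 2)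
        = sqL2 L h (pdx (fun a b c => f a b c ^ 3)) := by
      refine Eq.trans (tripleCongr fun x hx y hy z hz => ?_) rfl
      rw [hwx3 x y z ⟨Ioo_subset_Icc_self hx, Ioo_subset_Icc_self hy, Ioo_subset_Icc_self hz⟩]
    rw [he]
    show Real.sqrt _ ≤ Real.sqrt (gradSq L h _)
    refine Real.sqrt_le_sqrt ?_
    have h1 := sqL2_nonneg L h (pdy (fun a b c => f a b c ^ 3))
    have h2 := sqL2_nonneg L h (pdz (fun a b c => f a b c ^ 3))
    show sqL2 L h _ ≤ sqL2 L h _ + sqL2 L h _ + sqL2 L h _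
    linarith
  have hWyle : Real.sqrt (∫ x in Ioo (0:ℝ) L, ∫ y in Ioo (0:ℝ) L, ∫ z in Ioo (-h) (0:ℝ),
        wy (x, y, z) ^ 2) ≤ gradL2 L h (fun a b c => f a b c ^ 3) := by
    have he : (∫ x in Ioo (0:ℝ) L, ∫ y in Ioo (0:ℝ) L, ∫ z in Ioo (-h) (0:ℝ),
          wy (x, y, z) ^ 2)
        = sqL2 L h (pdy (fun a b c => f a b c ^ 3)) := by
      refine Eq.trans (tripleCongr fun x hx y hy z hz => ?_) rfl
      rw [hwy3 x y z ⟨Ioo_subset_Icc_self hx, Ioo_subset_Icc_self hy, Ioo_subset_Icc_self hz⟩]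
    rw [he]
    show Real.sqrt _ ≤ Real.sqrt (gradSq L h _)
    refine Real.sqrt_le_sqrt ?_
    have h1 := sqL2_nonneg L h (pdx (fun a b c => f a b c ^ 3))
    have h2 := sqL2_nonneg L h (pdz (fun a b c => f a b c ^ 3))
    show sqL2 L h _ ≤ sqL2 L h _ + sqL2 L h _ + sqL2 L h _
    linarith
  -- final assembly
  have hG0 : 0 ≤ gradL2 L h (fun a b c => f a b c ^ 3) := Real.sqrt_nonneg _
  have hsX0 : 0 ≤ Real.sqrt (∫ x in Ioo (0:ℝ) L, ∫ y in Ioo (0:ℝ) L,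
      ∫ z in Ioo (-h) (0:ℝ), f x y z ^ 6) := Real.sqrt_nonneg _
  have hBle : (∫ x in Ioo (0:ℝ) L, Bxf x)
      ≤ (1/L) * (∫ x in Ioo (0:ℝ) L, ∫ y in Ioo (0:ℝ) L, ∫ z in Ioo (-h) (0:ℝ), f x y z ^ 6)
        + 2 * Real.sqrt (∫ x in Ioo (0:ℝ) L, ∫ y in Ioo (0:ℝ) L,
            ∫ z in Ioo (-h) (0:ℝ), f x y z ^ 6)
          * gradL2 L h (fun a b c => f a b c ^ 3) := by
    rw [hBval]
    have h1 : Real.sqrt (∫ x in Ioo (0:ℝ) L, ∫ y in Ioo (0:ℝ) L, ∫ z in Ioo (-h) (0:ℝ),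
          f x y z ^ 6) * Real.sqrt (∫ x in Ioo (0:ℝ) L, ∫ y in Ioo (0:ℝ) L,
          ∫ z in Ioo (-h) (0:ℝ), wy (x, y, z) ^ 2)
        ≤ Real.sqrt (∫ x in Ioo (0:ℝ) L, ∫ y in Ioo (0:ℝ) L, ∫ z in Ioo (-h) (0:ℝ),
          f x y z ^ 6) * gradL2 L h (fun a b c => f a b c ^ 3) :=
      mul_le_mul_of_nonneg_left hWyle hsX0
    nlinarith [csy]
  have hAle : (∫ y in Ioo (0:ℝ) L, Ayf y)
      ≤ (1/L) * (∫ x in Ioo (0:ℝ) L, ∫ y in Ioo (0:ℝ) L, ∫ z in Ioo (-h) (0:ℝ), f x y z ^ 6)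
        + 2 * Real.sqrt (∫ x in Ioo (0:ℝ) L, ∫ y in Ioo (0:ℝ) L,
            ∫ z in Ioo (-h) (0:ℝ), f x y z ^ 6)
          * gradL2 L h (fun a b c => f a b c ^ 3) := by
    rw [hAval]
    have h1 : Real.sqrt (∫ x in Ioo (0:ℝ) L, ∫ y in Ioo (0:ℝ) L, ∫ z in Ioo (-h) (0:ℝ),
          f x y z ^ 6) * Real.sqrt (∫ x in Ioo (0:ℝ) L, ∫ y in Ioo (0:ℝ) L,
          ∫ z in Ioo (-h) (0:ℝ), wx (x, y, z) ^ 2)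
        ≤ Real.sqrt (∫ x in Ioo (0:ℝ) L, ∫ y in Ioo (0:ℝ) L, ∫ z in Ioo (-h) (0:ℝ),
          f x y z ^ 6) * gradL2 L h (fun a b c => f a b c ^ 3) :=
      mul_le_mul_of_nonneg_left hWxle hsX0
    nlinarith [csx]
  have hB0' : 0 ≤ ∫ x in Ioo (0:ℝ) L, Bxf x := integral_nonneg hB0
  have hA0' : 0 ≤ ∫ y in Ioo (0:ℝ) L, Ayf y := integral_nonneg hA0
  have hE0 : 0 ≤ (1/L) * (∫ x in Ioo (0:ℝ) L, ∫ y in Ioo (0:ℝ) L,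
      ∫ z in Ioo (-h) (0:ℝ), f x y z ^ 6)
      + 2 * Real.sqrt (∫ x in Ioo (0:ℝ) L, ∫ y in Ioo (0:ℝ) L,
          ∫ z in Ioo (-h) (0:ℝ), f x y z ^ 6)
        * gradL2 L h (fun a b c => f a b c ^ 3) := hB0'.trans hBle
  have hprod : (∫ x in Ioo (0:ℝ) L, Bxf x) * (∫ y in Ioo (0:ℝ) L, Ayf y)
      ≤ ((1/L) * (∫ x in Ioo (0:ℝ) L, ∫ y in Ioo (0:ℝ) L,
          ∫ z in Ioo (-h) (0:ℝ), f x y z ^ 6)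
        + 2 * Real.sqrt (∫ x in Ioo (0:ℝ) L, ∫ y in Ioo (0:ℝ) L,
            ∫ z in Ioo (-h) (0:ℝ), f x y z ^ 6)
          * gradL2 L h (fun a b c => f a b c ^ 3))
        * ((1/L) * (∫ x in Ioo (0:ℝ) L, ∫ y in Ioo (0:ℝ) L,
          ∫ z in Ioo (-h) (0:ℝ), f x y z ^ 6)
        + 2 * Real.sqrt (∫ x in Ioo (0:ℝ) L, ∫ y in Ioo (0:ℝ) L,
            ∫ z in Ioo (-h) (0:ℝ), f x y z ^ 6)
          * gradL2 L h (fun a b c => f a b c ^ 3)) :=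
    mul_le_mul hBle hAle hA0' hE0
  calc Real.sqrt (∫ x in Ioo (0:ℝ) L, ∫ y in Ioo (0:ℝ) L,
        (∫ z in Ioo (-h) (0:ℝ), f x y z ^ 6) ^ 2)
      ≤ Real.sqrt ((∫ x in Ioo (0:ℝ) L, Bxf x) * ∫ y in Ioo (0:ℝ) L, Ayf y) :=
        Real.sqrt_le_sqrt main2
    _ ≤ Real.sqrt (((1/L) * (∫ x in Ioo (0:ℝ) L, ∫ y in Ioo (0:ℝ) L,
          ∫ z in Ioo (-h) (0:ℝ), f x y z ^ 6)
        + 2 * Real.sqrt (∫ x in Ioo (0:ℝ) L, ∫ y in Ioo (0:ℝ) L,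
            ∫ z in Ioo (-h) (0:ℝ), f x y z ^ 6)
          * gradL2 L h (fun a b c => f a b c ^ 3))
        * ((1/L) * (∫ x in Ioo (0:ℝ) L, ∫ y in Ioo (0:ℝ) L,
          ∫ z in Ioo (-h) (0:ℝ), f x y z ^ 6)
        + 2 * Real.sqrt (∫ x in Ioo (0:ℝ) L, ∫ y in Ioo (0:ℝ) L,
            ∫ z in Ioo (-h) (0:ℝ), f x y z ^ 6)
          * gradL2 L h (fun a b c => f a b c ^ 3))) := Real.sqrt_le_sqrt hprod
    _ = _ := Real.sqrt_mul_self hE0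

set_option maxHeartbeats 1000000 in
/-- estimate \eqref{eq:ct63}:
there is `C > 0`, depending only on `M`, with
`|f|_{L^{12}_x L^6_z}⁶ ≤ C (|f|_{L⁶}³ |∇₃(f³)|_{L²} + |f|_{L⁶}⁶)`
for all `f` smooth near the closure of `M`. -/
theorem stmt5 (L h : ℝ) (hL : 0 < L) (hh : 0 < h) :
    ∃ C : ℝ, 0 < C ∧
      ∀ f : ℝ → ℝ → ℝ → ℝ, SmoothNearM L h f →
        anisoNorm L h 12 6 f ^ 6 ≤
          C * (LpNorm L h 6 f ^ 3 * gradL2 L h (fun x y z => (f x y z) ^ 3)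
            + LpNorm L h 6 f ^ 6) := by
  refine ⟨2 + 1/L, by positivity, ?_⟩
  intro f hf
  obtain ⟨U, hUo, hclU, hPc⟩ := hf
  have hcl : closure (Mset L h) = Icc 0 L ×ˢ Icc 0 L ×ˢ Icc (-h) 0 := by
    rw [Mset, closure_prod_eq, closure_prod_eq, closure_Ioo hL.ne,
      closure_Ioo (show (-h) ≠ (0:ℝ) by linarith)]
  have hKU : (Icc 0 L ×ˢ Icc 0 L ×ˢ Icc (-h) 0 : Set (ℝ × ℝ × ℝ)) ⊆ U := hcl ▸ hclU
  have hPK : ContinuousOn (fun p : ℝ × ℝ × ℝ => f p.1 p.2.1 p.2.2)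
      (Icc 0 L ×ˢ Icc 0 L ×ˢ Icc (-h) 0) := hPc.continuousOn.mono hKU
  have hpxc : ContinuousOn
      (fun p : ℝ × ℝ × ℝ => fderiv ℝ (fun q : ℝ × ℝ × ℝ => f q.1 q.2.1 q.2.2) p (1, 0, 0))
      (Icc 0 L ×ˢ Icc 0 L ×ˢ Icc (-h) 0) := (fderiv_contOn hUo hPc (1, 0, 0)).mono hKU
  have hpyc : ContinuousOn
      (fun p : ℝ × ℝ × ℝ => fderiv ℝ (fun q : ℝ × ℝ × ℝ => f q.1 q.2.1 q.2.2) p (0, 1, 0))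
      (Icc 0 L ×ˢ Icc 0 L ×ˢ Icc (-h) 0) := (fderiv_contOn hUo hPc (0, 1, 0)).mono hKU
  have hwxc : ContinuousOn (fun p : ℝ × ℝ × ℝ => 3 * f p.1 p.2.1 p.2.2 ^ 2
      * fderiv ℝ (fun q : ℝ × ℝ × ℝ => f q.1 q.2.1 q.2.2) p (1, 0, 0))
      (Icc 0 L ×ˢ Icc 0 L ×ˢ Icc (-h) 0) := (continuousOn_const.mul (hPK.pow 2)).mul hpxc
  have hwyc : ContinuousOn (fun p : ℝ × ℝ × ℝ => 3 * f p.1 p.2.1 p.2.2 ^ 2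
      * fderiv ℝ (fun q : ℝ × ℝ × ℝ => f q.1 q.2.1 q.2.2) p (0, 1, 0))
      (Icc 0 L ×ˢ Icc 0 L ×ˢ Icc (-h) 0) := (continuousOn_const.mul (hPK.pow 2)).mul hpyc
  have hd6x : ∀ x y z : ℝ, (x, y, z) ∈ (Icc 0 L ×ˢ Icc 0 L ×ˢ Icc (-h) 0 : Set (ℝ × ℝ × ℝ)) →
      HasDerivAt (fun t => f t y z ^ 6)
        (2 * f x y z ^ 3 * (3 * f x y z ^ 2
          * fderiv ℝ (fun q : ℝ × ℝ × ℝ => f q.1 q.2.1 q.2.2) (x, y, z) (1, 0, 0))) x := by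
    intro x y z hp
    have h2 : HasDerivAt (fun t => f t y z ^ 6) (((6:ℕ):ℝ) * f x y z ^ 5
        * fderiv ℝ (fun q : ℝ × ℝ × ℝ => f q.1 q.2.1 q.2.2) (x, y, z) (1, 0, 0)) x :=
      (hasDerivAt_x hUo hPc (hKU hp)).pow 6
    convert h2 using 1
    push_cast
    ring
  have hd6y : ∀ x y z : ℝ, (x, y, z) ∈ (Icc 0 L ×ˢ Icc 0 L ×ˢ Icc (-h) 0 : Set (ℝ × ℝ × ℝ)) →
      HasDerivAt (fun t => f x t z ^ 6)
        (2 * f x y z ^ 3 * (3 * f x y z ^ 2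
          * fderiv ℝ (fun q : ℝ × ℝ × ℝ => f q.1 q.2.1 q.2.2) (x, y, z) (0, 1, 0))) y := by
    intro x y z hp
    have h2 : HasDerivAt (fun t => f x t z ^ 6) (((6:ℕ):ℝ) * f x y z ^ 5
        * fderiv ℝ (fun q : ℝ × ℝ × ℝ => f q.1 q.2.1 q.2.2) (x, y, z) (0, 1, 0)) y :=
      (hasDerivAt_y hUo hPc (hKU hp)).pow 6
    convert h2 using 1
    push_cast
    ring
  have hwx3 : ∀ x y z : ℝ, (x, y, z) ∈ (Icc 0 L ×ˢ Icc 0 L ×ˢ Icc (-h) 0 : Set (ℝ × ℝ × ℝ)) →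
      pdx (fun a b c => f a b c ^ 3) x y z = 3 * f x y z ^ 2
        * fderiv ℝ (fun q : ℝ × ℝ × ℝ => f q.1 q.2.1 q.2.2) (x, y, z) (1, 0, 0) := by
    intro x y z hp
    have h2 : HasDerivAt (fun t => f t y z ^ 3) (((3:ℕ):ℝ) * f x y z ^ 2
        * fderiv ℝ (fun q : ℝ × ℝ × ℝ => f q.1 q.2.1 q.2.2) (x, y, z) (1, 0, 0)) x :=
      (hasDerivAt_x hUo hPc (hKU hp)).pow 3
    have h3 := h2.deriv
    show deriv (fun t => f t y z ^ 3) x = _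
    rw [h3]
    push_cast
    ring
  have hwy3 : ∀ x y z : ℝ, (x, y, z) ∈ (Icc 0 L ×ˢ Icc 0 L ×ˢ Icc (-h) 0 : Set (ℝ × ℝ × ℝ)) →
      pdy (fun a b c => f a b c ^ 3) x y z = 3 * f x y z ^ 2
        * fderiv ℝ (fun q : ℝ × ℝ × ℝ => f q.1 q.2.1 q.2.2) (x, y, z) (0, 1, 0) := by
    intro x y z hp
    have h2 : HasDerivAt (fun t => f x t z ^ 3) (((3:ℕ):ℝ) * f x y z ^ 2
        * fderiv ℝ (fun q : ℝ × ℝ × ℝ => f q.1 q.2.1 q.2.2) (x, y, z) (0, 1, 0)) y :=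
      (hasDerivAt_y hUo hPc (hKU hp)).pow 3
    have h3 := h2.deriv
    show deriv (fun t => f x t z ^ 3) y = _
    rw [h3]
    push_cast
    ring
  have hcore := core hL hh hPK
    (fun p : ℝ × ℝ × ℝ => 3 * f p.1 p.2.1 p.2.2 ^ 2
      * fderiv ℝ (fun q : ℝ × ℝ × ℝ => f q.1 q.2.1 q.2.2) p (1, 0, 0))
    (fun p : ℝ × ℝ × ℝ => 3 * f p.1 p.2.1 p.2.2 ^ 2
      * fderiv ℝ (fun q : ℝ × ℝ × ℝ => f q.1 q.2.1 q.2.2) p (0, 1, 0))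
    hwxc hwyc hd6x hd6y hwx3 hwy3
  -- bookkeeping with exponents
  have habs : ∀ a : ℝ, |a| ^ (6:ℝ) = a ^ 6 := fun a => by
    rw [show (6:ℝ) = ((6:ℕ):ℝ) by norm_num, Real.rpow_natCast, pow_abs,
      abs_of_nonneg (by positivity : (0:ℝ) ≤ a ^ 6)]
  have hX0 : 0 ≤ ∫ x in Ioo (0:ℝ) L, ∫ y in Ioo (0:ℝ) L, ∫ z in Ioo (-h) (0:ℝ),
      f x y z ^ 6 :=
    integral_nonneg fun x => integral_nonneg fun y => integral_nonneg fun z => by positivity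
  have hS0 : 0 ≤ ∫ x in Ioo (0:ℝ) L, ∫ y in Ioo (0:ℝ) L,
      (∫ z in Ioo (-h) (0:ℝ), f x y z ^ 6) ^ 2 :=
    integral_nonneg fun x => integral_nonneg fun y => sq_nonneg _
  have hXeq : (intM L h fun x y z => |f x y z| ^ (6:ℝ))
      = ∫ x in Ioo (0:ℝ) L, ∫ y in Ioo (0:ℝ) L, ∫ z in Ioo (-h) (0:ℝ), f x y z ^ 6 := by
    unfold intM
    simp only [habs]
  have hLp : LpNorm L h 6 f = (∫ x in Ioo (0:ℝ) L, ∫ y in Ioo (0:ℝ) L,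
      ∫ z in Ioo (-h) (0:ℝ), f x y z ^ 6) ^ ((1:ℝ)/6) := by
    unfold LpNorm
    rw [hXeq]
  have hLp3 : LpNorm L h 6 f ^ 3 = Real.sqrt (∫ x in Ioo (0:ℝ) L, ∫ y in Ioo (0:ℝ) L,
      ∫ z in Ioo (-h) (0:ℝ), f x y z ^ 6) := by
    rw [hLp, ← Real.rpow_natCast (_ ^ ((1:ℝ)/6)) 3, ← Real.rpow_mul hX0,
      show ((1:ℝ)/6) * ((3:ℕ):ℝ) = 1/2 by norm_num, ← Real.sqrt_eq_rpow]
  have hLp6 : LpNorm L h 6 f ^ 6 = ∫ x in Ioo (0:ℝ) L, ∫ y in Ioo (0:ℝ) L,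
      ∫ z in Ioo (-h) (0:ℝ), f x y z ^ 6 := by
    rw [hLp, ← Real.rpow_natCast (_ ^ ((1:ℝ)/6)) 6, ← Real.rpow_mul hX0,
      show ((1:ℝ)/6) * ((6:ℕ):ℝ) = 1 by norm_num, Real.rpow_one]
  have haniso : anisoNorm L h 12 6 f ^ 6 = Real.sqrt (∫ x in Ioo (0:ℝ) L,
      ∫ y in Ioo (0:ℝ) L, (∫ z in Ioo (-h) (0:ℝ), f x y z ^ 6) ^ 2) := by
    unfold anisoNorm
    simp only [habs]
    rw [show ((12:ℝ)/6) = ((2:ℕ):ℝ) by norm_num]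
    simp only [Real.rpow_natCast]
    rw [show ((1:ℝ)/12) = (12:ℝ)⁻¹ by norm_num]
    rw [← Real.rpow_natCast (_ ^ ((12:ℝ)⁻¹)) 6, ← Real.rpow_mul hS0,
      show ((12:ℝ)⁻¹) * ((6:ℕ):ℝ) = 1/2 by norm_num, ← Real.sqrt_eq_rpow]
  rw [haniso, hLp3, hLp6]
  have hG0 : 0 ≤ gradL2 L h (fun x y z => (f x y z) ^ 3) := Real.sqrt_nonneg _
  have hsX0 : 0 ≤ Real.sqrt (∫ x in Ioo (0:ℝ) L, ∫ y in Ioo (0:ℝ) L,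
      ∫ z in Ioo (-h) (0:ℝ), f x y z ^ 6) := Real.sqrt_nonneg _
  have hinv : (0:ℝ) < 1/L := by positivity
  nlinarith [hcore, hX0, mul_nonneg hsX0 hG0,
    mul_nonneg hinv.le (mul_nonneg hsX0 hG0), mul_nonneg hinv.le hX0]
end
end
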